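/- arXiv:1512.02981 — 6 statements merged into one kernel-verified Lean document; each statement's English description precedes it below -/
import Mathlib

section
/- Let t ≥ 1, 1 ≤ p ≤ ⌊(t+5)/4⌋, m = t+3-2p, distinct positive reals r_1 < ... < r_p, weights w_1 = r_1^{-m} and w_k = (-1)^k r_k^{-m} ∏_{2≤l≤p, l≠k}(r_1²-r_l²)/(r_k²-r_l²) for k ≥ 2, and complex points z_{k,j} = r_k e^{iπ(2j+k)/m}. Then for every 1 ≤ s ≤ t and 0 ≤ s_1 ≤ ⌊(t-s)/2⌋, one has Σ_{k=1}^p Σ_{j=1}^m w_k |z_{k,j}|^{2s_1} z_{k,j}^s = 0. -/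
open Polynomial Finset in
lemma lagrange_aux {F ι : Type*} [Field F] [DecidableEq ι] (s : Finset ι) (v : ι → F)
    (hv : Set.InjOn v s) (n : ℕ) (hn : n < s.card) (x : F) :
    ∑ k ∈ s, v k ^ n * ∏ l ∈ s.erase k, (x - v l) / (v k - v l) = x ^ n := by
  have hdeg : (Polynomial.X ^ n : F[X]).degree < s.card := by
    simpa using (Nat.cast_lt (α := WithBot ℕ)).2 hn
  have h := Lagrange.eq_interpolate (f := (Polynomial.X : F[X]) ^ n) hv hdeg
  have h2 := congrArg (Polynomial.eval x) h
  rw [Lagrange.interpolate_apply, Polynomial.eval_finset_sum] at h2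
  rw [Polynomial.eval_pow, Polynomial.eval_X] at h2
  rw [h2]
  refine Finset.sum_congr rfl fun k hk => ?_
  rw [Polynomial.eval_mul, Polynomial.eval_C, Polynomial.eval_pow, Polynomial.eval_X,
    Lagrange.basis, Polynomial.eval_prod]
  congr 1
  refine Finset.prod_congr rfl fun l hl => ?_
  simp [Lagrange.basisDivisor, div_eq_inv_mul]

open Real Complex in
theorem tight_planar_design_moments (t p m : ℕ) (ht : 1 ≤ t) (hp : 1 ≤ p)
    (hpt : p ≤ (t + 5) / 4) (hm : m = t + 3 - 2 * p)
    (r : ℕ → ℝ)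
    (hpos : ∀ k ∈ Finset.Icc 1 p, 0 < r k)
    (hmono : ∀ k ∈ Finset.Icc 1 p, ∀ l ∈ Finset.Icc 1 p, k < l → r k < r l)
    (w : ℕ → ℝ)
    (hw1 : w 1 = (r 1 ^ m)⁻¹)
    (hwk : ∀ k, 2 ≤ k → k ≤ p →
      w k = (-1) ^ k * (r k ^ m)⁻¹ *
        ∏ l ∈ (Finset.Icc 2 p).erase k, (r 1 ^ 2 - r l ^ 2) / (r k ^ 2 - r l ^ 2))
    (z : ℕ → ℕ → ℂ)
    (hz : ∀ k j, z k j = (r k : ℂ) * Complex.exp (((π : ℂ) * (2 * j + k) / m) * Complex.I))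
    (s s₁ : ℕ) (hs1 : 1 ≤ s) (hst : s ≤ t) (hs₁ : s₁ ≤ (t - s) / 2) :
    ∑ k ∈ Finset.Icc 1 p, ∑ j ∈ Finset.Icc 1 m,
      (w k : ℂ) * (‖z k j‖ : ℂ) ^ (2 * s₁) * z k j ^ s = 0 := by
  have h4p : p * 4 ≤ t + 5 := (Nat.le_div_iff_mul_le (by norm_num)).1 hpt
  have hm1 : 1 ≤ m := by omega
  have hmR : (m : ℝ) ≠ 0 := by positivity
  have hmC : (m : ℂ) ≠ 0 := by exact_mod_cast Nat.cast_ne_zero.2 (by omega)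
  -- |z k j| = r k
  have habs : ∀ k ∈ Finset.Icc 1 p, ∀ j, (‖z k j‖ : ℝ) = r k := by
    intro k hk j
    rw [hz, norm_mul]
    have he : ((π : ℂ) * (2 * j + k) / m) * Complex.I
        = ((π * (2 * j + k) / m : ℝ) : ℂ) * Complex.I := by push_cast; ring
    rw [he, Complex.norm_exp_ofReal_mul_I, mul_one, Complex.norm_real, Real.norm_eq_abs,
      abs_of_pos (hpos k hk)]
  set c : ℂ := Complex.exp (2 * (π : ℂ) * s / m * Complex.I) with hc
  -- z k j ^ s decomposition
  have hzs : ∀ k j, z k j ^ s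
      = (r k : ℂ) ^ s * Complex.exp ((π : ℂ) * k * s / m * Complex.I) * c ^ j := by
    intro k j
    rw [hz, mul_pow, ← Complex.exp_nat_mul, ← Complex.exp_nat_mul, mul_assoc,
      ← Complex.exp_add]
    congr 2
    field_simp
    ring
  by_cases hdvd : m ∣ s
  · -- s = m
    obtain ⟨q, hq⟩ := hdvd
    have hsm : s = m := by
      have h2m : t + 1 ≤ 2 * m := by omega
      rcases Nat.lt_or_ge q 2 with h2 | h2
      · have hq0 : q ≠ 0 := by rintro rfl; simp at hq; omega
        have : q = 1 := by omega
        rw [hq, this, mul_one]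
      · exfalso
        have h2s : 2 * m ≤ s := by
          rw [hq]
          calc 2 * m = m * 2 := by ring
            _ ≤ m * q := Nat.mul_le_mul_left m h2
        omega
    have hmt : m ≤ t := by omega
    have hp2 : 2 ≤ p := by omega
    have hs₁p : s₁ < p - 1 := by omega
    -- simplify c = 1 and the exponential
    have hcone : c = 1 := by
      rw [hc, hsm]
      have : 2 * (π : ℂ) * m / m * Complex.I = 2 * π * Complex.I := by field_simp
      rw [this]
      simpa [mul_comm] using Complex.exp_two_pi_mul_I
    have hexpk : ∀ k : ℕ, Complex.exp ((π : ℂ) * k * s / m * Complex.I) = (-1) ^ k := by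
      intro k
      have : (π : ℂ) * k * s / m * Complex.I = k * ((π : ℂ) * Complex.I) := by
        rw [hsm]; field_simp
      rw [this, Complex.exp_nat_mul, Complex.exp_pi_mul_I]
    have hinner : ∀ k ∈ Finset.Icc 1 p,
        ∑ j ∈ Finset.Icc 1 m, (w k : ℂ) * (‖z k j‖ : ℂ) ^ (2 * s₁) * z k j ^ s
        = (m : ℂ) * ((w k * (-1) ^ k * r k ^ (2 * s₁) * r k ^ m : ℝ) : ℂ) := by
      intro k hk
      rw [Finset.sum_congr rfl (fun j _ => by
        rw [habs k hk j, hzs, hexpk, hcone, one_pow, hsm])]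
      rw [Finset.sum_const, Nat.card_Icc, Nat.add_sub_cancel, nsmul_eq_mul]
      push_cast
      ring
    rw [Finset.sum_congr rfl hinner, ← Finset.mul_sum, ← Complex.ofReal_sum]
    have hreal : ∑ k ∈ Finset.Icc 1 p, (w k * (-1) ^ k * r k ^ (2 * s₁) * r k ^ m) = 0 := by
      have hsplit : Finset.Icc 1 p = insert 1 (Finset.Icc 2 p) := by
        ext x; simp only [Finset.mem_Icc, Finset.mem_insert]; omega
      have h1not : 1 ∉ Finset.Icc 2 p := by simp
      rw [hsplit, Finset.sum_insert h1not]
      have hr1 : (0:ℝ) < r 1 := hpos 1 (by simp [Finset.mem_Icc]; omega)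
      have hterm1 : w 1 * (-1) ^ 1 * r 1 ^ (2 * s₁) * r 1 ^ m = -(r 1 ^ 2) ^ s₁ := by
        rw [hw1, pow_mul]
        have h2 : (r 1 ^ m)⁻¹ * r 1 ^ m = 1 := inv_mul_cancel₀ (by positivity)
        linear_combination (-(r 1 ^ 2) ^ s₁) * h2
      have htermk : ∀ k ∈ Finset.Icc 2 p, w k * (-1) ^ k * r k ^ (2 * s₁) * r k ^ m
          = (r k ^ 2) ^ s₁ * ∏ l ∈ (Finset.Icc 2 p).erase k,
              (r 1 ^ 2 - r l ^ 2) / (r k ^ 2 - r l ^ 2) := by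
        intro k hk
        simp only [Finset.mem_Icc] at hk
        have hrk : (0:ℝ) < r k := hpos k (by simp [Finset.mem_Icc]; omega)
        rw [hwk k hk.1 hk.2, pow_mul]
        have h1 : ((-1:ℝ)) ^ k * (-1) ^ k = 1 := by
          rw [← pow_add, ← two_mul, pow_mul]; norm_num
        have h2 : (r k ^ m)⁻¹ * r k ^ m = 1 := inv_mul_cancel₀ (by positivity)
        set P := ∏ l ∈ (Finset.Icc 2 p).erase k,
            (r 1 ^ 2 - r l ^ 2) / (r k ^ 2 - r l ^ 2) with hP
        linear_combination ((r k ^ m)⁻¹ * r k ^ m * P * (r k ^ 2) ^ s₁) * h1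
          + (P * (r k ^ 2) ^ s₁) * h2
      rw [Finset.sum_congr rfl htermk, hterm1]
      have hinj : Set.InjOn (fun l => r l ^ 2) (Finset.Icc 2 p) := by
        intro a ha b hb hab
        simp only [Finset.coe_Icc, Set.mem_Icc] at ha hb
        simp only at hab
        by_contra hne
        rcases Nat.lt_or_ge a b with h | h
        · have := hmono a (by simp [Finset.mem_Icc]; omega) b (by simp [Finset.mem_Icc]; omega) h
          have ha' := hpos a (by simp [Finset.mem_Icc]; omega)
          nlinarith [hab]
        · have hlt : b < a := by omega
          have := hmono b (by simp [Finset.mem_Icc]; omega) a (by simp [Finset.mem_Icc]; omega) hlt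
          have hb' := hpos b (by simp [Finset.mem_Icc]; omega)
          nlinarith [hab]
      have hcard : s₁ < (Finset.Icc 2 p).card := by rw [Nat.card_Icc]; omega
      have := lagrange_aux (Finset.Icc 2 p) (fun l => r l ^ 2) hinj s₁ hcard (r 1 ^ 2)
      linarith [this]
    rw [hreal]
    simp
  · -- geometric sum vanishes
    have hcm : c ^ m = 1 := by
      rw [hc, ← Complex.exp_nat_mul]
      have : (m : ℂ) * (2 * (π : ℂ) * s / m * Complex.I) = s * (2 * π * Complex.I) := by
        field_simp
      rw [this]
      exact_mod_cast Complex.exp_int_mul_two_pi_mul_I s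
    have hcne : c ≠ 1 := by
      intro hc1
      rw [hc, Complex.exp_eq_one_iff] at hc1
      obtain ⟨n, hn⟩ := hc1
      have hsnm : (s : ℂ) = n * m := by
        have hπ : (π : ℂ) ≠ 0 := by exact_mod_cast Real.pi_ne_zero
        field_simp at hn
        have hne : (2 * (π : ℂ) * Complex.I) ≠ 0 :=
          mul_ne_zero (mul_ne_zero two_ne_zero (Complex.ofReal_ne_zero.2 Real.pi_ne_zero))
            Complex.I_ne_zero
        have h2 : (2 * (π : ℂ) * Complex.I) * (s : ℂ)
            = (2 * (π : ℂ) * Complex.I) * ((n : ℂ) * m) := by linear_combination (2 * (π : ℂ) * Complex.I) * hn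
        exact mul_left_cancel₀ hne h2
      have : (s : ℤ) = n * m := by exact_mod_cast hsnm
      exact hdvd (Int.natCast_dvd_natCast.mp ⟨n, by rw [this]; ring⟩)
    have hgeom : ∑ j ∈ Finset.Icc 1 m, c ^ j = 0 := by
      have h1 : Finset.range (m + 1) = insert 0 (Finset.Icc 1 m) := by
        ext x; simp only [Finset.mem_range, Finset.mem_insert, Finset.mem_Icc]; omega
      have h2 := geom_sum_eq hcne (m + 1)
      rw [h1, Finset.sum_insert (by simp)] at h2
      have h3 : (c ^ (m + 1) - 1) / (c - 1) = 1 := by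
        rw [pow_succ, hcm, one_mul]
        exact div_self (sub_ne_zero.2 hcne)
      rw [h3] at h2
      simpa using h2
    refine Finset.sum_eq_zero fun k hk => ?_
    have : ∀ j ∈ Finset.Icc 1 m,
        (w k : ℂ) * (‖z k j‖ : ℂ) ^ (2 * s₁) * z k j ^ s
        = ((w k : ℂ) * (r k : ℂ) ^ (2 * s₁) * (r k : ℂ) ^ s
            * Complex.exp ((π : ℂ) * k * s / m * Complex.I)) * c ^ j := by
      intro j _
      rw [habs k hk j, hzs]
      ring
    rw [Finset.sum_congr rfl this, ← Finset.mul_sum, hgeom, mul_zero]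
end

section
/- A finite weighted set (X, w) in ℝ² \ {0} with positive weights is a Euclidean t-design if and only if Σ_{z∈X} w(z)·|z|^{2s_1}·z^s = 0 for every 1 ≤ s ≤ t and 0 ≤ s_1 ≤ ⌊(t-s)/2⌋, where points of ℝ² are identified with complex numbers. -/
open MeasureTheory in
/-- `(X, w)` is a Euclidean `t`-design in the plane (identified with `ℂ`):
for every polynomial `f` on `ℝ²` of total degree at most `t`, the sum over the norm
spectrum of the layer weights times the average of `f` over the corresponding circle
equals the weighted sum of `f` over `X`.  The average of `f` over the circle of
radius `ρ` is `(2π)⁻¹ ∫_0^{2π} f(ρ cos θ, ρ sin θ) dθ`. -/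
def IsEuclideanDesign2 (X : Finset ℂ) (w : ℂ → ℝ) (t : ℕ) : Prop :=
  ∀ f : MvPolynomial (Fin 2) ℝ, f.totalDegree ≤ t →
    ∑ ρ ∈ X.image (fun z : ℂ => ‖z‖),
      ((∑ z ∈ X.filter (fun z => ‖z‖ = ρ), w z) *
        ((2 * Real.pi)⁻¹ * ∫ θ in (0:ℝ)..(2 * Real.pi),
          MvPolynomial.eval ![ρ * Real.cos θ, ρ * Real.sin θ] f)) =
    ∑ z ∈ X, w z * MvPolynomial.eval ![z.re, z.im] f

open MeasureTheory Finset

noncomputable section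

namespace ED2aux

variable (X : Finset ℂ) (w : ℂ → ℝ)


lemma integral_exp_int (m : ℤ) :
    (∫ θ in (0:ℝ)..(2*Real.pi), Complex.exp (m * Complex.I * θ)) =
      if m = 0 then (2*Real.pi : ℂ) else 0 := by
  rcases eq_or_ne m 0 with h | h
  · simp [h]
  · rw [if_neg h, integral_exp_mul_complex
      (mul_ne_zero (Int.cast_ne_zero.mpr h) Complex.I_ne_zero)]
    have h1 : (m : ℂ) * Complex.I * ((2*Real.pi : ℝ) : ℂ) = m * (2 * Real.pi * Complex.I) := by
      push_cast; ring
    have h2 : (m : ℂ) * Complex.I * ((0:ℝ) : ℂ) = 0 := by push_cast; ring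
    rw [h1, h2, Complex.exp_int_mul_two_pi_mul_I, Complex.exp_zero, sub_self, zero_div]

lemma expand_pow_mul (x y : ℂ) (j k : ℕ) :
    (x + y*Complex.I)^j * (x - y*Complex.I)^k =
    ∑ p ∈ range (j+1), ∑ q ∈ range (k+1),
      ((j.choose p : ℂ) * (k.choose q) * Complex.I^(j-p) * (-Complex.I)^(k-q)) *
        (x^(p+q) * y^((j-p)+(k-q))) := by
  rw [add_pow, sub_eq_add_neg, add_pow, Finset.sum_mul_sum]
  refine Finset.sum_congr rfl fun p hp => Finset.sum_congr rfl fun q hq => ?_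
  have h1 : (-(y*Complex.I))^(k-q) = (-Complex.I)^(k-q) * y^(k-q) := by
    rw [show -(y*Complex.I) = (-Complex.I)*y by ring, mul_pow]
  rw [h1]; ring

lemma expand_harm (u v : ℂ) (a b : ℕ) :
    ((u+v)/2)^a * ((u-v)/(2*Complex.I))^b =
    ∑ p ∈ range (a+1), ∑ q ∈ range (b+1),
      ((a.choose p : ℂ) * (b.choose q) * (2:ℂ)⁻¹^a * (2*Complex.I)⁻¹^b * (-1:ℂ)^(b-q)) *
        (u^(p+q) * v^((a-p)+(b-q))) := by
  have h0 : ((u+v)/2)^a * ((u-v)/(2*Complex.I))^b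
      = ((2:ℂ)⁻¹^a * (2*Complex.I)⁻¹^b) * ((u+v)^a * (u-v)^b) := by
    rw [div_pow, div_pow, div_eq_mul_inv, div_eq_mul_inv, ← inv_pow, ← inv_pow]; ring
  rw [h0, add_pow, sub_eq_add_neg, add_pow, Finset.sum_mul_sum, Finset.mul_sum]
  refine Finset.sum_congr rfl fun p hp => ?_
  rw [Finset.mul_sum]
  refine Finset.sum_congr rfl fun q hq => ?_
  have h1 : (-v)^(b-q) = (-1:ℂ)^(b-q) * v^(b-q) := by rw [neg_pow]
  rw [h1]; ring


variable (X : Finset ℂ) (w : ℂ → ℝ)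

def Wt (ρ : ℝ) : ℝ := ∑ z ∈ X.filter (fun z => ‖z‖ = ρ), w z

def circ (ρ θ : ℝ) : ℂ := (ρ:ℂ) * Complex.exp (θ * Complex.I)

lemma circ_re (ρ θ : ℝ) : (circ ρ θ).re = ρ * Real.cos θ := by
  simp [circ, Complex.exp_ofReal_mul_I_re, Complex.mul_re, Complex.exp_ofReal_mul_I_im]

lemma circ_im (ρ θ : ℝ) : (circ ρ θ).im = ρ * Real.sin θ := by
  simp [circ, Complex.exp_ofReal_mul_I_re, Complex.mul_im, Complex.exp_ofReal_mul_I_im]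

lemma continuous_circ (ρ : ℝ) : Continuous (circ ρ) := by unfold circ; fun_prop

def PhiR (g : ℂ → ℝ) : ℝ :=
  ∑ ρ ∈ X.image (fun z : ℂ => ‖z‖), Wt X w ρ *
    ((2*Real.pi)⁻¹ * ∫ θ in (0:ℝ)..(2*Real.pi), g (circ ρ θ))

def PsiR (g : ℂ → ℝ) : ℝ := ∑ z ∈ X, w z * g z

def Phi (g : ℂ → ℂ) : ℂ :=
  ∑ ρ ∈ X.image (fun z : ℂ => ‖z‖), (Wt X w ρ : ℂ) *
    (((2*Real.pi)⁻¹ : ℝ) * ∫ θ in (0:ℝ)..(2*Real.pi), g (circ ρ θ))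

def Psi (g : ℂ → ℂ) : ℂ := ∑ z ∈ X, (w z : ℂ) * g z

lemma intInt_ofReal (f : ℝ → ℝ) (a b : ℝ) :
    (∫ x in a..b, (f x : ℂ)) = ((∫ x in a..b, f x : ℝ) : ℂ) :=
  RCLike.intervalIntegral_ofReal

lemma Phi_ofReal (g : ℂ → ℝ) :
    Phi X w (fun ζ => (g ζ : ℂ)) = ((PhiR X w g : ℝ) : ℂ) := by
  unfold Phi PhiR
  simp only [intInt_ofReal]
  push_cast
  exact Finset.sum_congr rfl fun ρ _ => by ring

lemma Psi_ofReal (g : ℂ → ℝ) :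
    Psi X w (fun ζ => (g ζ : ℂ)) = ((PsiR X w g : ℝ) : ℂ) := by
  unfold Psi PsiR; push_cast; ring_nf

lemma PhiR_expand {ι : Type*} (s : Finset ι) (c : ι → ℝ) (G : ι → ℂ → ℝ)
    (hG : ∀ i ∈ s, Continuous (G i)) :
    PhiR X w (fun ζ => ∑ i ∈ s, c i * G i ζ) = ∑ i ∈ s, c i * PhiR X w (G i) := by
  unfold PhiR
  have key : ∀ ρ : ℝ, (∫ θ in (0:ℝ)..(2*Real.pi), ∑ i ∈ s, c i * G i (circ ρ θ))
      = ∑ i ∈ s, c i * ∫ θ in (0:ℝ)..(2*Real.pi), G i (circ ρ θ) := by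
    intro ρ
    rw [intervalIntegral.integral_finset_sum]
    · exact Finset.sum_congr rfl fun i _ => intervalIntegral.integral_const_mul _ _
    · intro i hi
      exact (continuous_const.mul ((hG i hi).comp (continuous_circ ρ))).intervalIntegrable _ _
  simp only [key, Finset.mul_sum]
  rw [Finset.sum_comm]
  exact Finset.sum_congr rfl fun i _ => Finset.sum_congr rfl fun ρ _ => by ring

lemma Phi_expand {ι : Type*} (s : Finset ι) (c : ι → ℂ) (G : ι → ℂ → ℂ)
    (hG : ∀ i ∈ s, Continuous (G i)) :
    Phi X w (fun ζ => ∑ i ∈ s, c i * G i ζ) = ∑ i ∈ s, c i * Phi X w (G i) := by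
  unfold Phi
  have key : ∀ ρ : ℝ, (∫ θ in (0:ℝ)..(2*Real.pi), ∑ i ∈ s, c i * G i (circ ρ θ))
      = ∑ i ∈ s, c i * ∫ θ in (0:ℝ)..(2*Real.pi), G i (circ ρ θ) := by
    intro ρ
    rw [intervalIntegral.integral_finset_sum]
    · exact Finset.sum_congr rfl fun i _ => intervalIntegral.integral_const_mul _ _
    · intro i hi
      exact (continuous_const.mul ((hG i hi).comp (continuous_circ ρ))).intervalIntegrable _ _
  simp only [key, Finset.mul_sum]
  rw [Finset.sum_comm]
  exact Finset.sum_congr rfl fun i _ => Finset.sum_congr rfl fun ρ _ => by ring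

lemma PsiR_expand {ι : Type*} (s : Finset ι) (c : ι → ℝ) (G : ι → ℂ → ℝ) :
    PsiR X w (fun ζ => ∑ i ∈ s, c i * G i ζ) = ∑ i ∈ s, c i * PsiR X w (G i) := by
  unfold PsiR
  simp only [Finset.mul_sum]
  rw [Finset.sum_comm]
  exact Finset.sum_congr rfl fun i _ => Finset.sum_congr rfl fun z _ => by ring

lemma Psi_expand {ι : Type*} (s : Finset ι) (c : ι → ℂ) (G : ι → ℂ → ℂ) :
    Psi X w (fun ζ => ∑ i ∈ s, c i * G i ζ) = ∑ i ∈ s, c i * Psi X w (G i) := by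
  unfold Psi
  simp only [Finset.mul_sum]
  rw [Finset.sum_comm]
  exact Finset.sum_congr rfl fun i _ => Finset.sum_congr rfl fun z _ => by ring

def M (a b : ℕ) : ℂ → ℝ := fun ζ => ζ.re ^ a * ζ.im ^ b
def MC (a b : ℕ) : ℂ → ℂ := fun ζ => (ζ.re:ℂ)^a * (ζ.im:ℂ)^b
def F (j k : ℕ) : ℂ → ℂ := fun ζ => ζ^j * (starRingEnd ℂ ζ)^k

lemma MC_eq_coe (a b : ℕ) : MC a b = fun ζ => ((M a b ζ : ℝ) : ℂ) := by
  funext ζ; simp [M, MC]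

lemma continuous_M (a b : ℕ) : Continuous (M a b) := by unfold M; fun_prop
lemma continuous_MC (a b : ℕ) : Continuous (MC a b) := by unfold MC; fun_prop
lemma continuous_F (j k : ℕ) : Continuous (F j k) := by
  unfold F; exact (continuous_pow j).mul ((Complex.continuous_conj.pow k))

lemma conj_eq (ζ : ℂ) : starRingEnd ℂ ζ = (ζ.re:ℂ) - (ζ.im:ℂ) * Complex.I := by
  apply Complex.ext <;> simp

lemma F_eq_sum_MC (j k : ℕ) (ζ : ℂ) :
    F j k ζ = ∑ pq ∈ range (j+1) ×ˢ range (k+1),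
      ((j.choose pq.1 : ℂ) * (k.choose pq.2) * Complex.I^(j-pq.1) * (-Complex.I)^(k-pq.2)) *
        MC (pq.1+pq.2) ((j-pq.1)+(k-pq.2)) ζ := by
  rw [Finset.sum_product]
  have := expand_pow_mul (ζ.re:ℂ) (ζ.im:ℂ) j k
  rw [Complex.re_add_im, ← conj_eq ζ] at this
  simpa [F, MC] using this

lemma MC_eq_sum_F (a b : ℕ) (ζ : ℂ) :
    MC a b ζ = ∑ pq ∈ range (a+1) ×ˢ range (b+1),
      ((a.choose pq.1 : ℂ) * (b.choose pq.2) * (2:ℂ)⁻¹^a * (2*Complex.I)⁻¹^b * (-1:ℂ)^(b-pq.2)) *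
        F (pq.1+pq.2) ((a-pq.1)+(b-pq.2)) ζ := by
  rw [Finset.sum_product]
  have hu : (ζ + starRingEnd ℂ ζ)/2 = (ζ.re:ℂ) := by
    rw [Complex.add_conj]; push_cast; ring
  have hv : (ζ - starRingEnd ℂ ζ)/(2*Complex.I) = (ζ.im:ℂ) := by
    rw [Complex.sub_conj]; push_cast
    field_simp
  have := expand_harm ζ (starRingEnd ℂ ζ) a b
  rw [hu, hv] at this
  simpa [F, MC] using this

lemma conj_circ (ρ θ : ℝ) :
    starRingEnd ℂ (circ ρ θ) = (ρ:ℂ) * Complex.exp (-(θ * Complex.I)) := by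
  simp [circ, map_mul, Complex.conj_ofReal, ← Complex.exp_conj, Complex.conj_I]

lemma F_circ (j k : ℕ) (ρ θ : ℝ) :
    F j k (circ ρ θ) =
      (ρ:ℂ)^(j+k) * Complex.exp ((((j:ℤ) - (k:ℤ) : ℤ) : ℂ) * Complex.I * θ) := by
  have hc : starRingEnd ℂ ((ρ:ℂ) * Complex.exp ((θ:ℂ) * Complex.I))
      = (ρ:ℂ) * Complex.exp (-((θ:ℂ) * Complex.I)) := conj_circ ρ θ
  simp only [F, circ, hc, mul_pow, ← Complex.exp_nat_mul]
  rw [mul_mul_mul_comm, ← pow_add, ← Complex.exp_add]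
  congr 1
  push_cast; ring

lemma integral_F_circ (ρ : ℝ) (j k : ℕ) :
    (∫ θ in (0:ℝ)..(2*Real.pi), F j k (circ ρ θ)) =
      if j = k then (2*Real.pi:ℂ) * (ρ:ℂ)^(j+k) else 0 := by
  simp only [F_circ]
  rw [intervalIntegral.integral_const_mul, integral_exp_int]
  rcases eq_or_ne j k with h|h
  · rw [if_pos (by omega : (j:ℤ) - (k:ℤ) = 0), if_pos h]; ring_nf
  · rw [if_neg (by omega : ¬((j:ℤ) - (k:ℤ) = 0)), if_neg h, mul_zero]

lemma twopi_cancel : (((2*Real.pi)⁻¹ : ℝ) : ℂ) * (2*Real.pi:ℂ) = 1 := by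
  have h1 : (((2*Real.pi)⁻¹ : ℝ) : ℂ) = (2*(Real.pi:ℂ))⁻¹ := by push_cast; ring
  rw [h1]
  exact inv_mul_cancel₀ (mul_ne_zero two_ne_zero (Complex.ofReal_ne_zero.mpr Real.pi_ne_zero))

lemma Phi_F (j k : ℕ) :
    Phi X w (F j k) =
      if j = k then ∑ z ∈ X, (w z:ℂ) * (‖z‖:ℂ)^(2*j) else 0 := by
  unfold Phi
  simp only [integral_F_circ]
  rcases eq_or_ne j k with h|h
  · subst h
    rw [if_pos rfl]
    have hcancel : ∀ ρ : ℝ, (((2*Real.pi)⁻¹ : ℝ) : ℂ) * ((2*Real.pi:ℂ) * (ρ:ℂ)^(j+j))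
        = (ρ:ℂ)^(2*j) := by
      intro ρ; rw [← mul_assoc, twopi_cancel, one_mul, two_mul j]
    have step : ∀ ρ : ℝ, (Wt X w ρ : ℂ) *
        (((2*Real.pi)⁻¹ : ℝ) * (if j = j then (2*Real.pi:ℂ) * (ρ:ℂ)^(j+j) else 0)) =
        ∑ z ∈ X.filter (fun z => ‖z‖ = ρ), (w z:ℂ) * (ρ:ℂ)^(2*j) := by
      intro ρ
      rw [if_pos rfl, hcancel, Wt]
      push_cast
      rw [Finset.sum_mul]
    calc ∑ ρ ∈ X.image (fun z : ℂ => ‖z‖), (Wt X w ρ : ℂ) *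
        (((2*Real.pi)⁻¹ : ℝ) * (if j = j then (2*Real.pi:ℂ) * (ρ:ℂ)^(j+j) else 0))
        = ∑ ρ ∈ X.image (fun z : ℂ => ‖z‖),
            ∑ z ∈ X.filter (fun z => ‖z‖ = ρ), (w z:ℂ) * (ρ:ℂ)^(2*j) :=
          Finset.sum_congr rfl fun ρ _ => step ρ
      _ = ∑ ρ ∈ X.image (fun z : ℂ => ‖z‖),
            ∑ z ∈ X.filter (fun z => ‖z‖ = ρ),
              (w z:ℂ) * (‖z‖:ℂ)^(2*j) :=
          Finset.sum_congr rfl fun ρ _ => Finset.sum_congr rfl fun z hz => by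
            rw [(Finset.mem_filter.mp hz).2]
      _ = ∑ z ∈ X, (w z:ℂ) * (‖z‖:ℂ)^(2*j) :=
          Finset.sum_fiberwise_of_maps_to (fun z hz => Finset.mem_image_of_mem _ hz) _
  · simp [h]

lemma pow_conj_abs (z : ℂ) (k : ℕ) :
    z^k * (starRingEnd ℂ z)^k = (‖z‖:ℂ)^(2*k) := by
  rw [← mul_pow, Complex.mul_conj, Complex.normSq_eq_norm_sq]
  push_cast
  rw [← pow_mul]

lemma Psi_F_diag (j : ℕ) :
    Psi X w (F j j) = ∑ z ∈ X, (w z:ℂ) * (‖z‖:ℂ)^(2*j) := by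
  unfold Psi
  exact Finset.sum_congr rfl fun z _ => by
    rw [show F j j z = z^j * (starRingEnd ℂ z)^j from rfl, pow_conj_abs]

lemma Psi_F_off (j k : ℕ) (h : k ≤ j) :
    Psi X w (F j k) = ∑ z ∈ X, (w z:ℂ) * (‖z‖:ℂ)^(2*k) * z^(j-k) := by
  unfold Psi
  refine Finset.sum_congr rfl fun z _ => ?_
  have hz : z^j = z^(j-k) * z^k := by rw [← pow_add]; congr 1; omega
  rw [show F j k z = z^j * (starRingEnd ℂ z)^k from rfl, hz,
    mul_assoc (z^(j-k)), pow_conj_abs]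
  ring

lemma Psi_F_conj (j k : ℕ) :
    Psi X w (F j k) = starRingEnd ℂ (Psi X w (F k j)) := by
  unfold Psi
  rw [map_sum]
  refine Finset.sum_congr rfl fun z _ => ?_
  simp only [F, map_mul, map_pow, Complex.conj_conj, Complex.conj_ofReal]
  ring

lemma forall_MC_iff_forall_F (t : ℕ) :
    (∀ a b : ℕ, a + b ≤ t → Phi X w (MC a b) = Psi X w (MC a b)) ↔
    (∀ j k : ℕ, j + k ≤ t → Phi X w (F j k) = Psi X w (F j k)) := by
  constructor
  · intro h j k hjk
    have hF : F j k = fun ζ => ∑ pq ∈ range (j+1) ×ˢ range (k+1),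
        ((j.choose pq.1 : ℂ) * (k.choose pq.2) * Complex.I^(j-pq.1) * (-Complex.I)^(k-pq.2)) *
          MC (pq.1+pq.2) ((j-pq.1)+(k-pq.2)) ζ := funext (F_eq_sum_MC j k)
    rw [hF, Phi_expand X w _ _ _ (fun pq _ => continuous_MC _ _), Psi_expand]
    refine Finset.sum_congr rfl fun pq hpq => ?_
    obtain ⟨hp, hq⟩ := Finset.mem_product.mp hpq
    rw [Finset.mem_range] at hp hq
    congr 1
    exact h _ _ (by omega)
  · intro h a b hab
    have hM : MC a b = fun ζ => ∑ pq ∈ range (a+1) ×ˢ range (b+1),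
        ((a.choose pq.1 : ℂ) * (b.choose pq.2) * (2:ℂ)⁻¹^a * (2*Complex.I)⁻¹^b *
          (-1:ℂ)^(b-pq.2)) * F (pq.1+pq.2) ((a-pq.1)+(b-pq.2)) ζ := funext (MC_eq_sum_F a b)
    rw [hM, Phi_expand X w _ _ _ (fun pq _ => continuous_F _ _), Psi_expand]
    refine Finset.sum_congr rfl fun pq hpq => ?_
    obtain ⟨hp, hq⟩ := Finset.mem_product.mp hpq
    rw [Finset.mem_range] at hp hq
    congr 1
    exact h _ _ (by omega)

lemma forall_F_iff_moments (t : ℕ) :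
    (∀ j k : ℕ, j + k ≤ t → Phi X w (F j k) = Psi X w (F j k)) ↔
    (∀ s s₁ : ℕ, 1 ≤ s → s ≤ t → s₁ ≤ (t - s) / 2 →
        ∑ z ∈ X, (w z : ℂ) * (‖z‖ : ℂ) ^ (2 * s₁) * z ^ s = 0) := by
  constructor
  · intro h s s₁ hs1 hst hs2
    have hdiv : s₁ * 2 ≤ t - s := (Nat.le_div_iff_mul_le two_pos).mp hs2
    have hjk : (s + s₁) + s₁ ≤ t := by omega
    have key := h (s + s₁) s₁ hjk
    rw [Phi_F, Psi_F_off X w (s+s₁) s₁ (by omega), if_neg (by omega)] at key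
    have : s + s₁ - s₁ = s := by omega
    rw [this] at key
    exact key.symm
  · intro h j k hjk
    rcases lt_trichotomy j k with hlt | heq | hgt
    · rw [Phi_F, if_neg (by omega), Psi_F_conj]
      have hz : Psi X w (F k j) = 0 := by
        rw [Psi_F_off X w k j hlt.le]
        exact h (k - j) j (by omega) (by omega)
          (by rw [Nat.le_div_iff_mul_le two_pos]; omega)
      rw [hz, map_zero]
    · subst heq
      rw [Phi_F, if_pos rfl, Psi_F_diag]
    · rw [Phi_F, if_neg (by omega), Psi_F_off X w j k hgt.le]
      exact (h (j - k) k (by omega) (by omega)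
        (by rw [Nat.le_div_iff_mul_le two_pos]; omega)).symm

lemma monomial_bridge (a b : ℕ) :
    (PhiR X w (M a b) = PsiR X w (M a b)) ↔ (Phi X w (MC a b) = Psi X w (MC a b)) := by
  rw [MC_eq_coe, Phi_ofReal, Psi_ofReal]
  exact ⟨fun h => by rw [h], fun h => Complex.ofReal_inj.mp h⟩

end ED2aux


namespace ED2aux

variable (X : Finset ℂ) (w : ℂ → ℝ)

lemma designLHS_eq (f : MvPolynomial (Fin 2) ℝ) :
    (∑ ρ ∈ X.image (fun z : ℂ => ‖z‖),
      ((∑ z ∈ X.filter (fun z => ‖z‖ = ρ), w z) *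
        ((2 * Real.pi)⁻¹ * ∫ θ in (0:ℝ)..(2 * Real.pi),
          MvPolynomial.eval ![ρ * Real.cos θ, ρ * Real.sin θ] f)))
      = PhiR X w (fun ζ => MvPolynomial.eval ![ζ.re, ζ.im] f) := by
  unfold PhiR Wt
  refine Finset.sum_congr rfl fun ρ _ => ?_
  congr 2
  refine intervalIntegral.integral_congr fun θ _ => ?_
  simp only [circ_re, circ_im]

lemma eval_fun_eq (f : MvPolynomial (Fin 2) ℝ) :
    (fun ζ : ℂ => MvPolynomial.eval ![ζ.re, ζ.im] f)
      = fun ζ => ∑ d ∈ f.support, MvPolynomial.coeff d f * M (d 0) (d 1) ζ := by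
  funext ζ
  rw [MvPolynomial.eval_eq']
  refine Finset.sum_congr rfl fun d _ => ?_
  rw [Fin.prod_univ_two]
  simp [M, Matrix.cons_val_zero, Matrix.cons_val_one, Matrix.head_cons, MvPolynomial.coeff]

lemma design_iff_monomials (t : ℕ) :
    IsEuclideanDesign2 X w t ↔
      (∀ a b : ℕ, a + b ≤ t → PhiR X w (M a b) = PsiR X w (M a b)) := by
  constructor
  · intro h a b hab
    set f : MvPolynomial (Fin 2) ℝ := MvPolynomial.X 0 ^ a * MvPolynomial.X 1 ^ b with hfdef
    have hdeg : f.totalDegree ≤ t := by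
      refine le_trans (MvPolynomial.totalDegree_mul _ _) (le_trans
        (add_le_add (MvPolynomial.totalDegree_pow _ a) (MvPolynomial.totalDegree_pow _ b)) ?_)
      rw [MvPolynomial.totalDegree_X, MvPolynomial.totalDegree_X]
      simpa using hab
    have hf := h f hdeg
    rw [designLHS_eq] at hf
    have hfun : (fun ζ : ℂ => MvPolynomial.eval ![ζ.re, ζ.im] f) = M a b := by
      funext ζ
      simp [hfdef, M, Matrix.cons_val_zero, Matrix.cons_val_one, Matrix.head_cons]
    calc PhiR X w (M a b) = PhiR X w (fun ζ : ℂ => MvPolynomial.eval ![ζ.re, ζ.im] f) := by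
          rw [hfun]
      _ = ∑ z ∈ X, w z * MvPolynomial.eval ![z.re, z.im] f := hf
      _ = PsiR X w (M a b) := by
          unfold PsiR
          refine Finset.sum_congr rfl fun z _ => ?_
          simp [hfdef, M, Matrix.cons_val_zero, Matrix.cons_val_one, Matrix.head_cons]
  · intro h f hdeg
    rw [designLHS_eq, eval_fun_eq,
      PhiR_expand X w _ _ _ (fun d _ => continuous_M _ _)]
    have h2 : (∑ z ∈ X, w z * MvPolynomial.eval ![z.re, z.im] f)
        = ∑ d ∈ f.support, MvPolynomial.coeff d f * PsiR X w (M (d 0) (d 1)) := by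
      rw [show (∑ z ∈ X, w z * MvPolynomial.eval ![z.re, z.im] f)
          = PsiR X w (fun ζ : ℂ => MvPolynomial.eval ![ζ.re, ζ.im] f) from rfl,
        eval_fun_eq, PsiR_expand]
    rw [h2]
    refine Finset.sum_congr rfl fun d hd => ?_
    congr 1
    apply h
    have hle := MvPolynomial.le_totalDegree hd
    have hsum : (d.sum fun _ e => e) = d 0 + d 1 := by
      rw [Finsupp.sum_fintype]
      · exact Fin.sum_univ_two _
      · intro i; rfl
    omega

end ED2aux


theorem euclideanDesign2_iff_moments (X : Finset ℂ) (w : ℂ → ℝ) (t : ℕ)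
    (h0 : (0 : ℂ) ∉ X) (hw : ∀ z ∈ X, 0 < w z) :
    IsEuclideanDesign2 X w t ↔
      ∀ s s₁ : ℕ, 1 ≤ s → s ≤ t → s₁ ≤ (t - s) / 2 →
        ∑ z ∈ X, (w z : ℂ) * (‖z‖ : ℂ) ^ (2 * s₁) * z ^ s = 0 := by
  rw [ED2aux.design_iff_monomials X w t,
    forall_congr' fun a => forall_congr' fun b =>
      imp_congr_right fun _ => ED2aux.monomial_bridge X w a b,
    ED2aux.forall_MC_iff_forall_F X w t, ED2aux.forall_F_iff_moments X w t]
end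
end

section
/- For f(x) = 2(x_1⁶+x_2⁶+x_3⁶) - 15(x_1⁴x_2²+x_1²x_2⁴+x_1⁴x_3²+x_1²x_3⁴+x_2⁴x_3²+x_2²x_3⁴) + 180x_1²x_2²x_3² on ℝⁿ (n ≥ 3) and 0 ≤ k ≤ n, the sum Σ_{x ∈ I^n_k} f(x) = 6·2^k·C(n-1,k-1) - 90·2^k·C(n-2,k-2) + 180·2^k·C(n-3,k-3). -/
/-- Binomial coefficient with the convention that it is `0` for negative arguments. -/
def intChoose (a b : ℤ) : ℤ :=
  if a < 0 ∨ b < 0 then 0 else (a.toNat.choose b.toNat : ℤ)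

/-- The set `I^n_k` of vectors in `{-1,0,1}^n ⊂ ℝⁿ` with squared norm `k`. -/
noncomputable def boxLayer (n k : ℕ) : Finset (Fin n → ℝ) :=
  (Fintype.piFinset fun _ : Fin n => ({-1, 0, 1} : Finset ℝ)).filter
    fun x => ∑ i, x i ^ 2 = k

open Polynomial Finset

lemma coeff_one_add_two_X_pow (N j : ℕ) :
    ((1 + C (2:ℝ) * X) ^ N).coeff j = (N.choose j : ℝ) * 2 ^ j := by
  induction N generalizing j with
  | zero =>
    cases j <;> simp [Polynomial.coeff_one]
  | succ N ih =>
    have h : (1 + C (2:ℝ) * X) ^ (N+1)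
        = (1 + C (2:ℝ) * X) ^ N + C 2 * ((1 + C (2:ℝ) * X) ^ N * X ^ 1) := by ring
    rw [h]
    cases j with
    | zero =>
      simp [coeff_add, coeff_C_mul, coeff_mul_X_pow', ih]
    | succ j =>
      simp only [coeff_add, coeff_C_mul, coeff_mul_X_pow', ih]
      rw [if_pos (by omega : 1 ≤ j + 1), Nat.choose_succ_succ]
      push_cast
      ring

lemma key (n k : ℕ) (T : Finset (Fin n)) :
    ∑ x ∈ boxLayer n k, ∏ i ∈ T, (x i)^2 =
      if T.card ≤ k then (2:ℝ)^k * ((n - T.card).choose (k - T.card) : ℝ) else 0 := by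
  classical
  have hC2 : C (2:ℝ) = 2 := map_ofNat _ 2
  set m := T.card with hm
  have hmn : m ≤ n := by simpa using Finset.card_le_univ T
  have hpoly : ∑ x ∈ Fintype.piFinset (fun _ : Fin n => ({-1,0,1} : Finset ℝ)),
      (C (∏ i ∈ T, (x i)^2) * X ^ ((univ.filter fun i => x i ≠ 0).card)) =
      (C (2:ℝ) * X) ^ m * (1 + C 2 * X) ^ (n - m) := by
    have hfac := Finset.prod_univ_sum (fun _ : Fin n => ({-1,0,1} : Finset ℝ))
        (fun i (a : ℝ) => C (if i ∈ T then a^2 else 1) * X ^ (if a = (0:ℝ) then 0 else 1))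
    have hL : (∏ i : Fin n, ∑ a ∈ ({-1,0,1} : Finset ℝ),
          C (if i ∈ T then a^2 else 1) * X ^ (if a = (0:ℝ) then 0 else 1))
        = (C (2:ℝ) * X) ^ m * (1 + C 2 * X) ^ (n - m) := by
      have hpt : ∀ i : Fin n, (∑ a ∈ ({-1,0,1} : Finset ℝ),
          C (if i ∈ T then a^2 else 1) * X ^ (if a = (0:ℝ) then 0 else 1))
          = if i ∈ T then C (2:ℝ) * X else 1 + C 2 * X := by
        intro i
        have h1 : (-1 : ℝ) ∉ ({0,1} : Finset ℝ) := by norm_num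
        have h2 : (0 : ℝ) ∉ ({1} : Finset ℝ) := by norm_num
        rw [show ({-1,0,1} : Finset ℝ) = insert (-1) (insert 0 {1}) from rfl,
          Finset.sum_insert h1, Finset.sum_insert h2, Finset.sum_singleton]
        by_cases hi : i ∈ T <;> simp [hi, hC2] <;> ring
      rw [Finset.prod_congr rfl (fun i _ => hpt i), Finset.prod_ite (fun _ => C (2:ℝ) * X)
        (fun _ => 1 + C (2:ℝ) * X), Finset.prod_const, Finset.prod_const]
      congr 2
      · simp [hm]
      · rw [show (univ.filter fun i => ¬ i ∈ T) = Tᶜ from by ext i; simp,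
          Finset.card_compl]
        simp [hm]
    have hR : ∀ x ∈ Fintype.piFinset (fun _ : Fin n => ({-1,0,1} : Finset ℝ)),
        (∏ i : Fin n, C (if i ∈ T then (x i)^2 else 1) * X ^ (if x i = (0:ℝ) then 0 else 1))
        = C (∏ i ∈ T, (x i)^2) * X ^ ((univ.filter fun i => x i ≠ 0).card) := by
      intro x _
      rw [Finset.prod_mul_distrib, ← map_prod, Finset.prod_pow_eq_pow_sum]
      congr 2
      · rw [Finset.prod_ite_mem, Finset.univ_inter]
      · rw [Finset.card_filter]
        apply Finset.sum_congr rfl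
        intro i _
        by_cases h : x i = 0 <;> simp [h]
    rw [← hL, hfac]
    exact Finset.sum_congr rfl fun x hx => (hR x hx).symm
  have hbox : boxLayer n k = (Fintype.piFinset fun _ : Fin n => ({-1,0,1} : Finset ℝ)).filter
      (fun x => (univ.filter fun i => x i ≠ 0).card = k) := by
    unfold boxLayer
    apply Finset.filter_congr
    intro x hx
    have h1 : ∀ i, (x i)^2 = if x i ≠ 0 then (1:ℝ) else 0 := by
      intro i
      have := Fintype.mem_piFinset.mp hx i
      simp only [Finset.mem_insert, Finset.mem_singleton] at this
      rcases this with h | h | h <;> norm_num [h]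
    rw [Finset.sum_congr rfl (fun i _ => h1 i), Finset.sum_boole]
    simp [Nat.cast_inj]
  have hco := congrArg (fun p => Polynomial.coeff p k) hpoly
  simp only [Polynomial.finset_sum_coeff, Polynomial.coeff_C_mul, Polynomial.coeff_X_pow] at hco
  have hLHS : ∑ x ∈ Fintype.piFinset (fun _ : Fin n => ({-1,0,1} : Finset ℝ)),
      (∏ i ∈ T, (x i)^2) * (if k = ((univ.filter fun i => x i ≠ 0).card) then (1:ℝ) else 0)
      = ∑ x ∈ boxLayer n k, ∏ i ∈ T, (x i)^2 := by
    rw [hbox, Finset.sum_filter]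
    apply Finset.sum_congr rfl
    intro x _
    by_cases h : (univ.filter fun i => x i ≠ 0).card = k
    · simp [h]
    · rw [if_neg (fun hh => h hh.symm)]; simp [h]
  have hRHS : (((C (2:ℝ) * X) ^ m * (1 + C 2 * X) ^ (n - m)).coeff k)
      = if m ≤ k then (2:ℝ)^k * ((n - m).choose (k - m) : ℝ) else 0 := by
    rw [mul_pow, ← C_pow, mul_assoc, mul_comm (X ^ m) ((1 + C (2:ℝ) * X) ^ (n-m)),
      ← mul_assoc]
    rw [Polynomial.coeff_mul_X_pow']
    simp only [Polynomial.coeff_C_mul, coeff_one_add_two_X_pow]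
    split_ifs with h
    · rw [← mul_assoc, mul_comm ((2:ℝ)^m) _, mul_assoc, ← pow_add,
        Nat.add_sub_cancel' h, mul_comm]
    · simp
  rw [← hLHS, hco]
  exact hRHS

lemma key1 (n k : ℕ) (i : Fin n) :
    ∑ x ∈ boxLayer n k, (x i)^2 =
      if 1 ≤ k then (2:ℝ)^k * ((n - 1).choose (k - 1) : ℝ) else 0 := by
  have h := key n k {i}
  simpa using h

lemma key2 (n k : ℕ) (i j : Fin n) (hij : i ≠ j) :
    ∑ x ∈ boxLayer n k, (x i)^2 * (x j)^2 =
      if 2 ≤ k then (2:ℝ)^k * ((n - 2).choose (k - 2) : ℝ) else 0 := by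
  have h := key n k {i, j}
  rw [Finset.card_insert_of_notMem (by simp [hij])] at h
  simp only [Finset.card_singleton] at h
  rw [← h]
  apply Finset.sum_congr rfl
  intro x _
  rw [Finset.prod_insert (by simp [hij]), Finset.prod_singleton]

lemma key3 (n k : ℕ) (i j l : Fin n) (hij : i ≠ j) (hil : i ≠ l) (hjl : j ≠ l) :
    ∑ x ∈ boxLayer n k, (x i)^2 * (x j)^2 * (x l)^2 =
      if 3 ≤ k then (2:ℝ)^k * ((n - 3).choose (k - 3) : ℝ) else 0 := by
  have h := key n k {i, j, l}
  rw [Finset.card_insert_of_notMem (by simp [hij, hil]),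
    Finset.card_insert_of_notMem (by simp [hjl])] at h
  simp only [Finset.card_singleton] at h
  rw [← h]
  apply Finset.sum_congr rfl
  intro x _
  rw [Finset.prod_insert (by simp [hij, hil]), Finset.prod_insert (by simp [hjl]),
    Finset.prod_singleton]
  ring

lemma intChoose_cast (n k j : ℕ) (hj : j ≤ n) :
    ((intChoose ((n:ℤ) - j) ((k:ℤ) - j) : ℤ) : ℝ) =
      if j ≤ k then (((n - j).choose (k - j) : ℕ) : ℝ) else 0 := by
  unfold intChoose
  by_cases h : j ≤ k
  · rw [if_pos h, if_neg (by omega : ¬((n:ℤ) - j < 0 ∨ (k:ℤ) - j < 0))]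
    rw [show ((n:ℤ) - j).toNat = n - j by omega, show ((k:ℤ) - j).toNat = k - j by omega]
    simp
  · rw [if_neg h, if_pos (Or.inr (by omega))]
    simp

theorem sum_f63_over_boxLayer (n k : ℕ) (hn : 3 ≤ n) (hk : k ≤ n) :
    ∑ x ∈ boxLayer n k,
        (2 * (x ⟨0, by omega⟩ ^ 6 + x ⟨1, by omega⟩ ^ 6 + x ⟨2, by omega⟩ ^ 6)
          - 15 * (x ⟨0, by omega⟩ ^ 4 * x ⟨1, by omega⟩ ^ 2
            + x ⟨0, by omega⟩ ^ 2 * x ⟨1, by omega⟩ ^ 4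
            + x ⟨0, by omega⟩ ^ 4 * x ⟨2, by omega⟩ ^ 2
            + x ⟨0, by omega⟩ ^ 2 * x ⟨2, by omega⟩ ^ 4
            + x ⟨1, by omega⟩ ^ 4 * x ⟨2, by omega⟩ ^ 2
            + x ⟨1, by omega⟩ ^ 2 * x ⟨2, by omega⟩ ^ 4)
          + 180 * x ⟨0, by omega⟩ ^ 2 * x ⟨1, by omega⟩ ^ 2 * x ⟨2, by omega⟩ ^ 2) =
      ((6 * 2 ^ k * intChoose (n - 1) (k - 1)
        - 90 * 2 ^ k * intChoose (n - 2) (k - 2)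
        + 180 * 2 ^ k * intChoose (n - 3) (k - 3) : ℤ) : ℝ) := by
  set i0 : Fin n := ⟨0, by omega⟩
  set i1 : Fin n := ⟨1, by omega⟩
  set i2 : Fin n := ⟨2, by omega⟩
  have h01 : i0 ≠ i1 := by simp [i0, i1, Fin.ext_iff]
  have h02 : i0 ≠ i2 := by simp [i0, i2, Fin.ext_iff]
  have h12 : i1 ≠ i2 := by simp [i1, i2, Fin.ext_iff]
  have hpt : ∀ x ∈ boxLayer n k,
      (2 * (x i0 ^ 6 + x i1 ^ 6 + x i2 ^ 6)
        - 15 * (x i0 ^ 4 * x i1 ^ 2 + x i0 ^ 2 * x i1 ^ 4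
          + x i0 ^ 4 * x i2 ^ 2 + x i0 ^ 2 * x i2 ^ 4
          + x i1 ^ 4 * x i2 ^ 2 + x i1 ^ 2 * x i2 ^ 4)
        + 180 * x i0 ^ 2 * x i1 ^ 2 * x i2 ^ 2)
      = 2 * (x i0)^2 + 2 * (x i1)^2 + 2 * (x i2)^2
        - 30 * ((x i0)^2 * (x i1)^2) - 30 * ((x i0)^2 * (x i2)^2)
        - 30 * ((x i1)^2 * (x i2)^2) + 180 * ((x i0)^2 * (x i1)^2 * (x i2)^2) := by
    intro x hx
    have hmem := (Finset.mem_filter.mp hx).1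
    have hval : ∀ l : Fin n, x l ^ 4 = x l ^ 2 ∧ x l ^ 6 = x l ^ 2 := by
      intro l
      have := Fintype.mem_piFinset.mp hmem l
      simp only [Finset.mem_insert, Finset.mem_singleton] at this
      rcases this with h | h | h <;> rw [h] <;> norm_num
    rw [(hval i0).2, (hval i1).2, (hval i2).2, (hval i0).1, (hval i1).1, (hval i2).1]
    ring
  rw [Finset.sum_congr rfl hpt]
  simp only [Finset.sum_add_distrib, Finset.sum_sub_distrib, ← Finset.mul_sum]
  rw [key1 n k i0, key1 n k i1, key1 n k i2, key2 n k i0 i1 h01, key2 n k i0 i2 h02,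
    key2 n k i1 i2 h12, key3 n k i0 i1 i2 h01 h02 h12]
  push_cast
  have e1 := intChoose_cast n k 1 (by omega)
  have e2 := intChoose_cast n k 2 (by omega)
  have e3 := intChoose_cast n k 3 (by omega)
  push_cast at e1 e2 e3
  rw [e1, e2, e3]
  split_ifs <;> push_cast <;> ring
end

section
/- Let λ > 0 with λ ≠ 1, and in ℝ³ let X be the union of the octahedron vertices {±e_i : 1≤i≤3} with weight 1 and the scaled cube vertices (λ/√3)·{-1,1}³ with weight 9/(8λ⁴). Then Σ_{x∈X} w(x)‖x‖^{2s_1} f(x) = 0 for all homogeneous harmonic polynomials f of degree s on ℝ³ with 1 ≤ s ≤ 5 - 2s_1 and s_1 ≥ 0, i.e., (X,w) is a Euclidean 5-design of 14 points in ℝ³. -/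
open MvPolynomial Finsupp

lemma coeff_pderiv {σ : Type*} [DecidableEq σ] (i : σ) (m : σ →₀ ℕ) (f : MvPolynomial σ ℝ) :
    coeff m (pderiv i f) = ((m i : ℝ) + 1) * coeff (m + Finsupp.single i 1) f := by
  induction f using MvPolynomial.induction_on' with
  | monomial d a =>
    rw [pderiv_monomial, coeff_monomial, coeff_monomial]
    by_cases h : d = m + Finsupp.single i 1
    · subst h
      have h1 : m + Finsupp.single i 1 - Finsupp.single i 1 = m := by
        ext j
        rw [Finsupp.tsub_apply, Finsupp.add_apply]
        omega
      have h2 : ((m + Finsupp.single i 1 : σ →₀ ℕ)) i = m i + 1 := by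
        rw [Finsupp.add_apply, Finsupp.single_apply, if_pos rfl]
      rw [if_pos h1, h2]
      simp only [if_pos trivial]
      push_cast; ring
    · have : ¬ (d - Finsupp.single i 1 = m) ∨ d i = 0 := by
        by_cases hdi : d i = 0
        · right; exact hdi
        · left; intro he
          apply h
          ext j
          have hej := congrArg (fun g => g j) he
          simp only [Finsupp.tsub_apply] at hej
          rw [Finsupp.add_apply, Finsupp.single_apply]
          rw [Finsupp.single_apply] at hej
          by_cases hj : i = j
          · subst hj; rw [if_pos rfl] at hej ⊢; omega
          · rw [if_neg hj] at hej ⊢; omega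
      rcases this with h' | h'
      · rw [if_neg h', if_neg h]; ring
      · rw [if_neg h, h']
        simp
  | add p q hp hq =>
    simp only [map_add, coeff_add, hp, hq]; ring

lemma deg3 (d : Fin 3 →₀ ℕ) : d.degree = d 0 + d 1 + d 2 := by
  rw [Finsupp.degree_apply, Finset.sum_subset (Finset.subset_univ d.support)
    (fun x _ hx => Finsupp.notMem_support_iff.mp hx), Fin.sum_univ_three]

lemma eval_single_eq {s : ℕ} (f : MvPolynomial (Fin 3) ℝ) (hf : f.IsHomogeneous s)
    (i : Fin 3) (a : ℝ) :
    eval (Pi.single i a) f = a ^ s * coeff (Finsupp.single i s) f := by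
  rw [eval_eq', Finset.sum_eq_single (Finsupp.single i s)]
  · have key : ∀ j : Fin 3, (Pi.single (M := fun _ : Fin 3 => ℝ) i a j) ^ (Finsupp.single i s j) =
        if j = i then a ^ s else 1 := by
      intro j
      by_cases hj : j = i
      · subst hj; simp [Finsupp.single_apply]
      · simp [Finsupp.single_apply, Pi.single_apply, hj, Ne.symm hj]
    rw [Finset.prod_congr rfl (fun j _ => key j), Finset.prod_ite_eq' Finset.univ i
      (fun _ => a ^ s)]
    simp [mul_comm]
  · intro b hb hne
    have hdeg : b.degree = s := by
      by_contra h
      exact (MvPolynomial.mem_support_iff.mp hb) (hf.coeff_eq_zero h)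
    have hex : ∃ j, j ≠ i ∧ b j ≠ 0 := by
      by_contra h
      push_neg at h
      apply hne
      have hb' : b = Finsupp.single i (b i) := by
        ext j
        by_cases hj : j = i
        · subst hj; simp [Finsupp.single_apply]
        · rw [h j hj, Finsupp.single_apply, if_neg (Ne.symm hj)]
      have hsub : b.support ⊆ {i} := by
        intro j hj
        rcases eq_or_ne j i with rfl | hji
        · simp
        · exact absurd (h j hji) (Finsupp.mem_support_iff.mp hj)
      have hbi : b.degree = b i := by
        rw [Finsupp.degree_apply, Finset.sum_subset hsub
          (fun x _ hx => Finsupp.notMem_support_iff.mp hx), Finset.sum_singleton]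
      rw [hb', hbi.symm.trans hdeg]
    obtain ⟨j, hji, hbj⟩ := hex
    rw [Finset.prod_eq_zero (Finset.mem_univ j), mul_zero]
    rw [Pi.single_apply, if_neg hji]
    exact zero_pow hbj
  · intro h
    rw [MvPolynomial.notMem_support_iff.mp h, zero_mul]

lemma cube_sum {s : ℕ} (f : MvPolynomial (Fin 3) ℝ) (hf : f.IsHomogeneous s) (c : ℝ) :
    ∑ ε ∈ Fintype.piFinset (fun _ : Fin 3 => ({-1, 1} : Finset ℝ)),
        eval (fun i => c * ε i) f
      = c ^ s * ∑ d ∈ f.support, coeff d f *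
          ((((-1:ℝ) ^ (d 0) + 1) * ((-1:ℝ) ^ (d 1) + 1)) * ((-1:ℝ) ^ (d 2) + 1)) := by
  simp_rw [eval_eq']
  rw [Finset.sum_comm, Finset.mul_sum]
  refine Finset.sum_congr rfl fun d hd => ?_
  have hdeg : d.degree = s := by
    by_contra h
    exact (MvPolynomial.mem_support_iff.mp hd) (hf.coeff_eq_zero h)
  have hsum : ∑ i : Fin 3, d i = s := by
    rw [Fin.sum_univ_three, ← deg3, hdeg]
  have step : ∀ ε : Fin 3 → ℝ,
      (∏ i : Fin 3, (c * ε i) ^ (d i)) = c ^ s * ∏ i : Fin 3, (ε i) ^ (d i) := by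
    intro ε
    rw [← hsum, ← Finset.prod_pow_eq_pow_sum]
    rw [← Finset.prod_mul_distrib]
    exact Finset.prod_congr rfl fun i _ => mul_pow _ _ _
  calc ∑ ε ∈ Fintype.piFinset (fun _ : Fin 3 => ({-1, 1} : Finset ℝ)),
        coeff d f * ∏ i : Fin 3, (c * ε i) ^ (d i)
      = coeff d f * c ^ s * ∑ ε ∈ Fintype.piFinset (fun _ : Fin 3 => ({-1, 1} : Finset ℝ)),
          ∏ i : Fin 3, (ε i) ^ (d i) := by
        rw [Finset.mul_sum]
        exact Finset.sum_congr rfl fun ε _ => by rw [step ε]; ring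
    _ = coeff d f * c ^ s * ∏ i : Fin 3, ((-1:ℝ) ^ (d i) + 1) := by
        congr 1
        rw [← Finset.prod_univ_sum (fun _ : Fin 3 => ({-1, 1} : Finset ℝ))
          (fun i a => a ^ d i)]
        refine Finset.prod_congr rfl fun i _ => ?_
        rw [Finset.sum_pair (by norm_num : (-1:ℝ) ≠ 1), one_pow]
    _ = c ^ s * (coeff d f *
          ((((-1:ℝ) ^ (d 0) + 1) * ((-1:ℝ) ^ (d 1) + 1)) * ((-1:ℝ) ^ (d 2) + 1))) := by
        rw [Fin.prod_univ_three]; ring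

lemma harm_rel (f : MvPolynomial (Fin 3) ℝ)
    (hharm : ∑ i : Fin 3, pderiv i (pderiv i f) = 0) (m : Fin 3 →₀ ℕ) :
    ∑ i : Fin 3, ((m i : ℝ) + 1) * ((m i : ℝ) + 2) * coeff (m + Finsupp.single i 2) f = 0 := by
  have key : ∀ i : Fin 3, coeff m (pderiv i (pderiv i f)) =
      ((m i : ℝ) + 1) * ((m i : ℝ) + 2) * coeff (m + Finsupp.single i 2) f := by
    intro i
    rw [_root_.coeff_pderiv, _root_.coeff_pderiv]
    have h1 : ((m + Finsupp.single i 1 : Fin 3 →₀ ℕ)) i = m i + 1 := by simp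
    have h2 : m + Finsupp.single i 1 + Finsupp.single i 1 = m + Finsupp.single i 2 := by
      rw [add_assoc, ← Finsupp.single_add]
    rw [h1, h2]; push_cast; ring
  calc ∑ i : Fin 3, ((m i : ℝ) + 1) * ((m i : ℝ) + 2) * coeff (m + Finsupp.single i 2) f
      = ∑ i : Fin 3, coeff m (pderiv i (pderiv i f)) := by
        exact Finset.sum_congr rfl fun i _ => (key i).symm
    _ = coeff m (∑ i : Fin 3, pderiv i (pderiv i f)) := by
        rw [MvPolynomial.coeff_sum]
    _ = 0 := by rw [hharm, coeff_zero]

lemma fin3_ext_iff (d e : Fin 3 →₀ ℕ) : d = e ↔ d 0 = e 0 ∧ d 1 = e 1 ∧ d 2 = e 2 := by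
  constructor
  · rintro rfl; exact ⟨rfl, rfl, rfl⟩
  · rintro ⟨h0, h1, h2⟩; ext j; fin_cases j <;> assumption

lemma prod_eval2 (d : Fin 3 →₀ ℕ) (hd : d 0 + d 1 + d 2 = 2) :
    (((-1:ℝ) ^ (d 0) + 1) * ((-1:ℝ) ^ (d 1) + 1)) * ((-1:ℝ) ^ (d 2) + 1)
    = 8 * ((if d = Finsupp.single 0 2 then (1:ℝ) else 0)
        + (if d = Finsupp.single 1 2 then (1:ℝ) else 0)
        + (if d = Finsupp.single 2 2 then (1:ℝ) else 0)) := by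
  simp only [fin3_ext_iff, Finsupp.single_apply]
  norm_num
  obtain ⟨a, b, c, ha, hb, hc⟩ : ∃ a b c, d 0 = a ∧ d 1 = b ∧ d 2 = c := ⟨_, _, _, rfl, rfl, rfl⟩
  rw [ha, hb, hc] at hd ⊢
  have hA : a ≤ 2 := by omega
  have hB : b ≤ 2 := by omega
  have hC : c ≤ 2 := by omega
  interval_cases a <;> interval_cases b <;> interval_cases c <;>
    first | omega | norm_num [Fin.ext_iff]

lemma prod_eval4 (d : Fin 3 →₀ ℕ) (hd : d 0 + d 1 + d 2 = 4) :
    (((-1:ℝ) ^ (d 0) + 1) * ((-1:ℝ) ^ (d 1) + 1)) * ((-1:ℝ) ^ (d 2) + 1)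
    = 8 * ((if d = Finsupp.single 0 4 then (1:ℝ) else 0)
        + (if d = Finsupp.single 1 4 then (1:ℝ) else 0)
        + (if d = Finsupp.single 2 4 then (1:ℝ) else 0)
        + (if d = Finsupp.single 0 2 + Finsupp.single 1 2 then (1:ℝ) else 0)
        + (if d = Finsupp.single 0 2 + Finsupp.single 2 2 then (1:ℝ) else 0)
        + (if d = Finsupp.single 1 2 + Finsupp.single 2 2 then (1:ℝ) else 0)) := by
  simp only [fin3_ext_iff, Finsupp.single_apply, Finsupp.add_apply]
  norm_num
  obtain ⟨a, b, c, ha, hb, hc⟩ : ∃ a b c, d 0 = a ∧ d 1 = b ∧ d 2 = c := ⟨_, _, _, rfl, rfl, rfl⟩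
  rw [ha, hb, hc] at hd ⊢
  have hA : a ≤ 4 := by omega
  have hB : b ≤ 4 := by omega
  have hC : c ≤ 4 := by omega
  interval_cases a <;> interval_cases b <;> interval_cases c <;>
    first | omega | norm_num [Fin.ext_iff]

lemma ind_sum (f : MvPolynomial (Fin 3) ℝ) (t : Fin 3 →₀ ℕ) :
    ∑ d ∈ f.support, coeff d f * (if d = t then (1:ℝ) else 0) = coeff t f := by
  simp only [mul_ite, mul_one, mul_zero]
  rw [Finset.sum_ite_eq' f.support t (fun d => coeff d f)]
  by_cases h : t ∈ f.support
  · rw [if_pos h]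
  · rw [if_neg h, MvPolynomial.notMem_support_iff.mp h]

lemma odd_prod (d : Fin 3 →₀ ℕ) (hodd : ¬ Even (d 0 + d 1 + d 2)) :
    (((-1:ℝ) ^ (d 0) + 1) * ((-1:ℝ) ^ (d 1) + 1)) * ((-1:ℝ) ^ (d 2) + 1) = 0 := by
  have h : Odd (d 0) ∨ Odd (d 1) ∨ Odd (d 2) := by
    by_contra h
    push_neg at h
    obtain ⟨h0, h1, h2⟩ := h
    rw [Nat.not_odd_iff_even] at h0 h1 h2
    exact hodd ((h0.add h1).add h2)
  rcases h with h | h | h <;> rw [Odd.neg_one_pow h] <;> ring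


open MvPolynomial in
/-- The union of the octahedron `{±e_i}` (weight 1) and the scaled cube
`(λ/√3)·{-1,1}³` (weight `9/(8λ⁴)`) is a Euclidean 5-design in `ℝ³`
(Neumaier–Seidel criterion). -/
theorem octahedron_cube_tight_5design (l : ℝ) (hl : 0 < l) (hl1 : l ≠ 1)
    (s s₁ : ℕ) (hs : 1 ≤ s) (hts : s + 2 * s₁ ≤ 5)
    (f : MvPolynomial (Fin 3) ℝ) (hf : f.IsHomogeneous s)
    (hharm : ∑ i : Fin 3, pderiv i (pderiv i f) = 0) :
    (∑ i : Fin 3, ((1 : ℝ) * (1 : ℝ) ^ (2 * s₁) * eval (Pi.single i (1 : ℝ)) f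
        + (1 : ℝ) * (1 : ℝ) ^ (2 * s₁) * eval (-(Pi.single i (1 : ℝ))) f))
      + ∑ ε ∈ Fintype.piFinset (fun _ : Fin 3 => ({-1, 1} : Finset ℝ)),
          (9 / (8 * l ^ 4)) * l ^ (2 * s₁) * eval (fun i => l / Real.sqrt 3 * ε i) f
      = 0 := by
  have hneg : ∀ i : Fin 3, (-(Pi.single i (1:ℝ)) : Fin 3 → ℝ) = Pi.single i (-1:ℝ) := by
    intro i; ext j
    rcases eq_or_ne j i with rfl | h
    · simp
    · simp [Pi.single_apply, h]
  simp only [one_mul, one_pow, hneg]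
  rw [← Finset.mul_sum, cube_sum f hf (l / Real.sqrt 3)]
  simp only [eval_single_eq f hf, one_pow]
  rw [Fin.sum_univ_three]
  have hs5 : s ≤ 5 := by omega
  have hdegmem : ∀ n, f.IsHomogeneous n → ∀ d ∈ f.support, d 0 + d 1 + d 2 = n := by
    intro n hfn d hd
    rw [← deg3]
    by_contra h
    exact (MvPolynomial.mem_support_iff.mp hd) (hfn.coeff_eq_zero h)
  interval_cases s
  -- s = 1
  · have hS : ∑ d ∈ f.support, coeff d f *
        ((((-1:ℝ) ^ (d 0) + 1) * ((-1:ℝ) ^ (d 1) + 1)) * ((-1:ℝ) ^ (d 2) + 1)) = 0 := by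
      refine Finset.sum_eq_zero fun d hd => ?_
      rw [odd_prod d (by rw [hdegmem 1 hf d hd]; decide), mul_zero]
    rw [hS]; ring
  -- s = 2
  · have h2 := harm_rel f hharm 0
    rw [Fin.sum_univ_three] at h2
    simp only [Finsupp.coe_zero, Pi.zero_apply, Nat.cast_zero, zero_add] at h2
    have hS : ∑ d ∈ f.support, coeff d f *
        ((((-1:ℝ) ^ (d 0) + 1) * ((-1:ℝ) ^ (d 1) + 1)) * ((-1:ℝ) ^ (d 2) + 1))
        = 8 * (coeff (Finsupp.single 0 2) f + coeff (Finsupp.single 1 2) f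
            + coeff (Finsupp.single 2 2) f) := by
      calc ∑ d ∈ f.support, coeff d f *
            ((((-1:ℝ) ^ (d 0) + 1) * ((-1:ℝ) ^ (d 1) + 1)) * ((-1:ℝ) ^ (d 2) + 1))
          = ∑ d ∈ f.support,
            (8 * (coeff d f * (if d = Finsupp.single 0 2 then (1:ℝ) else 0))
            + 8 * (coeff d f * (if d = Finsupp.single 1 2 then (1:ℝ) else 0))
            + 8 * (coeff d f * (if d = Finsupp.single 2 2 then (1:ℝ) else 0))) := by
            refine Finset.sum_congr rfl fun d hd => ?_
            rw [prod_eval2 d (hdegmem 2 hf d hd)]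
            ring
        _ = _ := by
            rw [Finset.sum_add_distrib, Finset.sum_add_distrib, ← Finset.mul_sum,
              ← Finset.mul_sum, ← Finset.mul_sum, ind_sum, ind_sum, ind_sum]
            ring
    rw [hS]
    linear_combination (2 + 9 / (8 * l ^ 4) * l ^ (2 * s₁) * ((l / Real.sqrt 3) ^ 2 * 8)) / 2 * h2
  -- s = 3
  · have hS : ∑ d ∈ f.support, coeff d f *
        ((((-1:ℝ) ^ (d 0) + 1) * ((-1:ℝ) ^ (d 1) + 1)) * ((-1:ℝ) ^ (d 2) + 1)) = 0 := by
      refine Finset.sum_eq_zero fun d hd => ?_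
      rw [odd_prod d (by rw [hdegmem 3 hf d hd]; decide), mul_zero]
    rw [hS]; ring
  -- s = 4
  · have hs₁ : s₁ = 0 := by omega
    subst hs₁
    have e0 : Finsupp.single (0:Fin 3) 2 + Finsupp.single (0:Fin 3) 2
        = Finsupp.single (0:Fin 3) 4 := by rw [← Finsupp.single_add]
    have e1 : Finsupp.single (1:Fin 3) 2 + Finsupp.single (1:Fin 3) 2
        = Finsupp.single (1:Fin 3) 4 := by rw [← Finsupp.single_add]
    have e2 : Finsupp.single (2:Fin 3) 2 + Finsupp.single (2:Fin 3) 2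
        = Finsupp.single (2:Fin 3) 4 := by rw [← Finsupp.single_add]
    have c10 : Finsupp.single (1:Fin 3) 2 + Finsupp.single (0:Fin 3) 2
        = Finsupp.single (0:Fin 3) 2 + Finsupp.single (1:Fin 3) 2 := add_comm _ _
    have c20 : Finsupp.single (2:Fin 3) 2 + Finsupp.single (0:Fin 3) 2
        = Finsupp.single (0:Fin 3) 2 + Finsupp.single (2:Fin 3) 2 := add_comm _ _
    have c21 : Finsupp.single (2:Fin 3) 2 + Finsupp.single (1:Fin 3) 2
        = Finsupp.single (1:Fin 3) 2 + Finsupp.single (2:Fin 3) 2 := add_comm _ _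
    have h0 := harm_rel f hharm (Finsupp.single 0 2)
    have h1 := harm_rel f hharm (Finsupp.single 1 2)
    have h2 := harm_rel f hharm (Finsupp.single 2 2)
    rw [Fin.sum_univ_three] at h0 h1 h2
    rw [e0] at h0
    rw [c10, e1] at h1
    rw [c20, c21, e2] at h2
    norm_num [Finsupp.single_apply, Fin.ext_iff] at h0 h1 h2
    have hS : ∑ d ∈ f.support, coeff d f *
        ((((-1:ℝ) ^ (d 0) + 1) * ((-1:ℝ) ^ (d 1) + 1)) * ((-1:ℝ) ^ (d 2) + 1))
        = 8 * (coeff (Finsupp.single 0 4) f + coeff (Finsupp.single 1 4) f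
            + coeff (Finsupp.single 2 4) f
            + coeff (Finsupp.single 0 2 + Finsupp.single 1 2) f
            + coeff (Finsupp.single 0 2 + Finsupp.single 2 2) f
            + coeff (Finsupp.single 1 2 + Finsupp.single 2 2) f) := by
      calc ∑ d ∈ f.support, coeff d f *
            ((((-1:ℝ) ^ (d 0) + 1) * ((-1:ℝ) ^ (d 1) + 1)) * ((-1:ℝ) ^ (d 2) + 1))
          = ∑ d ∈ f.support,
            (8 * (coeff d f * (if d = Finsupp.single 0 4 then (1:ℝ) else 0))
            + 8 * (coeff d f * (if d = Finsupp.single 1 4 then (1:ℝ) else 0))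
            + 8 * (coeff d f * (if d = Finsupp.single 2 4 then (1:ℝ) else 0))
            + 8 * (coeff d f * (if d = Finsupp.single 0 2 + Finsupp.single 1 2 then (1:ℝ) else 0))
            + 8 * (coeff d f * (if d = Finsupp.single 0 2 + Finsupp.single 2 2 then (1:ℝ) else 0))
            + 8 * (coeff d f * (if d = Finsupp.single 1 2 + Finsupp.single 2 2 then (1:ℝ) else 0))) := by
            refine Finset.sum_congr rfl fun d hd => ?_
            rw [prod_eval4 d (hdegmem 4 hf d hd)]
            ring
        _ = _ := by
            rw [Finset.sum_add_distrib, Finset.sum_add_distrib, Finset.sum_add_distrib,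
              Finset.sum_add_distrib, Finset.sum_add_distrib,
              ← Finset.mul_sum, ← Finset.mul_sum, ← Finset.mul_sum, ← Finset.mul_sum,
              ← Finset.mul_sum, ← Finset.mul_sum,
              ind_sum, ind_sum, ind_sum, ind_sum, ind_sum, ind_sum]
            ring
    rw [hS]
    have hsqrt : (l / Real.sqrt 3) ^ 4 = l ^ 4 / 9 := by
      rw [div_pow, show (Real.sqrt 3) ^ 4 = ((Real.sqrt 3) ^ 2) ^ 2 by ring,
        Real.sq_sqrt (by norm_num : (0:ℝ) ≤ 3)]
      norm_num
    rw [hsqrt]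
    have hconst : ∀ X : ℝ, 9 / (8 * l ^ 4) * l ^ (2 * 0) * (l ^ 4 / 9 * X) = X / 8 := by
      intro X
      have hl4 : l ^ 4 ≠ 0 := pow_ne_zero _ (ne_of_gt hl)
      rw [pow_zero]
      field_simp
    rw [hconst]
    linear_combination (h0 + h1 + h2) / 4
  -- s = 5
  · have hS : ∑ d ∈ f.support, coeff d f *
        ((((-1:ℝ) ^ (d 0) + 1) * ((-1:ℝ) ^ (d 1) + 1)) * ((-1:ℝ) ^ (d 2) + 1)) = 0 := by
      refine Finset.sum_eq_zero fun d hd => ?_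
      rw [odd_prod d (by rw [hdegmem 5 hf d hd]; decide), mul_zero]
    rw [hS]; ring
end

section
/- Let λ > 0, λ ≠ 1, and in ℝ³ consider X = octahedron {±e_i} with weight 1, cuboctahedron (r_2/√2)·I³_2 with r_2 = √((2λ+3)/(5λ)) and weight 100λ³/(2λ+3)³, and cube (r_3/√3)·{-1,1}³ with r_3 = √((2λ+3)/5) and weight 675/(8(2λ+3)³). Then (X,w) is a Euclidean 7-design of 26 points in ℝ³, i.e., Σ_{x∈X} w(x)‖x‖^{2s_1} f(x) = 0 for all homogeneous harmonic f of degree s with 1 ≤ s ≤ 7-2s_1, s_1 ≥ 0. -/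
namespace OctDesignAux

open MvPolynomial Finset.Nat

noncomputable def mk (v : Fin 3 → ℕ) : Fin 3 →₀ ℕ := Finsupp.equivFunOnFinite.symm v

lemma mk_apply (v : Fin 3 → ℕ) (i : Fin 3) : mk v i = v i := rfl

lemma vec3_eq {α : Type*} (a b c d e f : α) : (![a,b,c] = ![d,e,f]) ↔ a = d ∧ b = e ∧ c = f := by
  constructor
  · intro h; exact ⟨congrFun h 0, congrFun h 1, congrFun h 2⟩
  · rintro ⟨rfl, rfl, rfl⟩; rfl

lemma coeff_pderiv (i : Fin 3) (m : Fin 3 →₀ ℕ) (g : MvPolynomial (Fin 3) ℝ) :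
    coeff m (pderiv i g) = ((m i : ℝ) + 1) * coeff (m + Finsupp.single i 1) g := by
  induction g using MvPolynomial.induction_on' with
  | add p q hp hq => simp [hp, hq]; ring
  | monomial d a =>
    rw [pderiv_monomial, coeff_monomial, coeff_monomial]
    by_cases h : d = m + Finsupp.single i 1
    · subst h
      have h1 : m + Finsupp.single i 1 - Finsupp.single i 1 = m := by
        ext j
        rw [Finsupp.tsub_apply, Finsupp.add_apply]
        omega
      have h2 : (m + Finsupp.single i 1 : Fin 3 →₀ ℕ) i = m i + 1 := by
        rw [Finsupp.add_apply, Finsupp.single_apply, if_pos rfl]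
      rw [if_pos h1, if_pos rfl, h2]
      push_cast; ring
    · rw [if_neg h]
      by_cases h2 : d - Finsupp.single i 1 = m
      · rw [if_pos h2]
        have hdi : d i = 0 := by
          by_contra hdi
          apply h
          ext j
          have hj2 := DFunLike.congr_fun h2 j
          rw [Finsupp.tsub_apply] at hj2
          rw [Finsupp.add_apply]
          by_cases hj : i = j
          · subst hj
            simp at hj2 ⊢
            omega
          · simp only [Finsupp.single_apply, if_neg hj] at hj2 ⊢
            omega
        simp [hdi]
      · rw [if_neg h2, mul_zero]

lemma mk_add_single (v : Fin 3 → ℕ) (i : Fin 3) :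
    mk v + Finsupp.single i 1 + Finsupp.single i 1
      = mk (fun j => v j + (if i = j then 2 else 0)) := by
  ext j
  simp only [Finsupp.add_apply, Finsupp.single_apply, mk_apply]
  by_cases h : i = j <;> simp [h]

lemma harm_rel {f : MvPolynomial (Fin 3) ℝ}
    (hharm : ∑ i : Fin 3, pderiv i (pderiv i f) = 0) (a b c : ℕ) :
    ((a : ℝ) + 1) * ((a : ℝ) + 2) * coeff (mk ![a + 2, b, c]) f
      + ((b : ℝ) + 1) * ((b : ℝ) + 2) * coeff (mk ![a, b + 2, c]) f
      + ((c : ℝ) + 1) * ((c : ℝ) + 2) * coeff (mk ![a, b, c + 2]) f = 0 := by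
  have h := congrArg (coeff (mk ![a, b, c])) hharm
  rw [coeff_zero, coeff_sum, Fin.sum_univ_three] at h
  rw [coeff_pderiv, coeff_pderiv, coeff_pderiv, coeff_pderiv, coeff_pderiv, coeff_pderiv] at h
  rw [mk_add_single, mk_add_single, mk_add_single] at h
  have e0 : (fun j => ![a, b, c] j + if (0 : Fin 3) = j then 2 else 0) = ![a + 2, b, c] := by
    funext j; fin_cases j <;> simp
  have e1 : (fun j => ![a, b, c] j + if (1 : Fin 3) = j then 2 else 0) = ![a, b + 2, c] := by
    funext j; fin_cases j <;> simp
  have e2 : (fun j => ![a, b, c] j + if (2 : Fin 3) = j then 2 else 0) = ![a, b, c + 2] := by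
    funext j; fin_cases j <;> simp
  rw [e0, e1, e2] at h
  have v0 : (mk ![a, b, c] + Finsupp.single 0 1 : Fin 3 →₀ ℕ) 0 = a + 1 := by
    simp [mk_apply, Finsupp.add_apply]
  have v1 : (mk ![a, b, c] + Finsupp.single 1 1 : Fin 3 →₀ ℕ) 1 = b + 1 := by
    simp [mk_apply, Finsupp.add_apply]
  have v2 : (mk ![a, b, c] + Finsupp.single 2 1 : Fin 3 →₀ ℕ) 2 = c + 1 := by
    simp [mk_apply, Finsupp.add_apply]
  rw [v0, v1, v2] at h
  have w0 : mk ![a, b, c] 0 = a := rfl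
  have w1 : mk ![a, b, c] 1 = b := rfl
  have w2 : mk ![a, b, c] 2 = c := rfl
  rw [w0, w1, w2] at h
  push_cast at h ⊢
  linarith [h]

lemma eval_expand {s : ℕ} {f : MvPolynomial (Fin 3) ℝ} (hf : f.IsHomogeneous s) (x : Fin 3 → ℝ) :
    eval x f = ∑ v ∈ antidiagonalTuple 3 s,
      coeff (mk v) f * (x 0 ^ v 0 * x 1 ^ v 1 * x 2 ^ v 2) := by
  classical
  rw [eval_eq']
  have hsub : f.support ⊆ (antidiagonalTuple 3 s).image mk := by
    intro d hd
    have hdeg : d.degree = s := by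
      by_contra hne
      exact (mem_support_iff.mp hd) (hf.coeff_eq_zero hne)
    refine Finset.mem_image.mpr ⟨⇑d, ?_, ?_⟩
    · rw [mem_antidiagonalTuple]
      rw [Finsupp.degree] at hdeg
      rw [← hdeg]
      exact (Finset.sum_subset (Finset.subset_univ _)
        (fun i _ hi => Finsupp.notMem_support_iff.mp hi)).symm
    · exact Finsupp.equivFunOnFinite.symm_apply_apply d
  rw [Finset.sum_subset hsub (fun d _ hd => by rw [notMem_support_iff.mp hd, zero_mul])]
  have hinj : ∀ u ∈ antidiagonalTuple 3 s, ∀ w ∈ antidiagonalTuple 3 s, mk u = mk w → u = w :=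
    fun u _ w _ h => Finsupp.equivFunOnFinite.symm.injective h
  rw [Finset.sum_image hinj]
  refine Finset.sum_congr rfl fun v _ => ?_
  rw [Fin.prod_univ_three]
  rfl

lemma eval_neg {s : ℕ} {f : MvPolynomial (Fin 3) ℝ} (hf : f.IsHomogeneous s) (x : Fin 3 → ℝ) :
    eval (-x) f = (-1 : ℝ) ^ s * eval x f := by
  rw [eval_expand hf, eval_expand hf, Finset.mul_sum]
  refine Finset.sum_congr rfl fun v hv => ?_
  have hsum : v 0 + v 1 + v 2 = s := by
    have := mem_antidiagonalTuple.mp hv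
    rwa [Fin.sum_univ_three] at this
  have n0 : (-x) 0 = -(x 0) := rfl
  have n1 : (-x) 1 = -(x 1) := rfl
  have n2 : (-x) 2 = -(x 2) := rfl
  rw [n0, n1, n2, neg_pow (x 0), neg_pow (x 1), neg_pow (x 2), ← hsum, pow_add, pow_add]
  ring

lemma eval_scale {s : ℕ} {f : MvPolynomial (Fin 3) ℝ} (hf : f.IsHomogeneous s) (c : ℝ)
    (x : Fin 3 → ℝ) :
    eval (fun i => c * x i) f = c ^ s * eval x f := by
  rw [eval_expand hf, eval_expand hf, Finset.mul_sum]
  refine Finset.sum_congr rfl fun v hv => ?_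
  have hsum : v 0 + v 1 + v 2 = s := by
    have := mem_antidiagonalTuple.mp hv
    rwa [Fin.sum_univ_three] at this
  show coeff (mk v) f * ((c * x 0) ^ v 0 * (c * x 1) ^ v 1 * (c * x 2) ^ v 2) = _
  rw [mul_pow, mul_pow, mul_pow, ← hsum, pow_add, pow_add]
  ring

lemma single0 : (Pi.single (0 : Fin 3) (1 : ℝ)) = ![1, 0, 0] := by
  funext j; fin_cases j <;> simp
lemma single1 : (Pi.single (1 : Fin 3) (1 : ℝ)) = ![0, 1, 0] := by
  funext j; fin_cases j <;> simp
lemma single2 : (Pi.single (2 : Fin 3) (1 : ℝ)) = ![0, 0, 1] := by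
  funext j; fin_cases j <;> simp
lemma negv (a b c : ℝ) : -(![a, b, c]) = ![-a, -b, -c] := by
  funext j; fin_cases j <;> simp

lemma sum_piFinset3 (s₀ : Finset ℝ) (F : (Fin 3 → ℝ) → ℝ) :
    ∑ x ∈ Fintype.piFinset (fun _ : Fin 3 => s₀), F x
      = ∑ a ∈ s₀, ∑ b ∈ s₀, ∑ c ∈ s₀, F ![a, b, c] := by
  rw [← Finset.sum_product', ← Finset.sum_product']
  refine Finset.sum_nbij' (fun x => ((x 0, x 1), x 2)) (fun p => ![p.1.1, p.1.2, p.2]) ?_ ?_ ?_ ?_ ?_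
  · intro x hx
    simp only [Fintype.mem_piFinset] at hx
    simp [Finset.mem_product, hx 0, hx 1, hx 2]
  · intro p hp
    simp only [Finset.mem_product] at hp
    simp only [Fintype.mem_piFinset]
    intro i; fin_cases i <;> simp [hp.1.1, hp.1.2, hp.2]
  · intro x hx
    funext i; fin_cases i <;> rfl
  · intro p hp; rfl
  · intro x hx
    congr 1
    funext i; fin_cases i <;> rfl

lemma sum_boxLayer (F : (Fin 3 → ℝ) → ℝ) :
    ∑ x ∈ boxLayer 3 2, F x =
      F ![-1, -1, 0] + F ![-1, 0, -1] + F ![-1, 0, 1] + F ![-1, 1, 0]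
        + F ![0, -1, -1] + F ![0, -1, 1] + F ![0, 1, -1] + F ![0, 1, 1]
        + F ![1, -1, 0] + F ![1, 0, -1] + F ![1, 0, 1] + F ![1, 1, 0] := by
  rw [boxLayer, Finset.sum_filter, sum_piFinset3]
  norm_num [Fin.sum_univ_three, Finset.sum_insert, Finset.mem_insert, Finset.mem_singleton,
    Matrix.cons_val_zero, Matrix.cons_val_one, Matrix.head_cons, Matrix.cons_val_two, Matrix.tail_cons]
  ring

lemma sum_cube (F : (Fin 3 → ℝ) → ℝ) :
    ∑ x ∈ Fintype.piFinset (fun _ : Fin 3 => ({-1, 1} : Finset ℝ)), F x =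
      F ![-1, -1, -1] + F ![-1, -1, 1] + F ![-1, 1, -1] + F ![-1, 1, 1]
        + F ![1, -1, -1] + F ![1, -1, 1] + F ![1, 1, -1] + F ![1, 1, 1] := by
  rw [sum_piFinset3]
  norm_num [Finset.sum_insert, Finset.mem_insert, Finset.mem_singleton]
  ring

lemma sum_adt2 (G : (Fin 3 → ℕ) → ℝ) : ∑ v ∈ antidiagonalTuple 3 2, G v = G ![0,0,2] + G ![0,1,1] + G ![0,2,0] + G ![1,0,1] + G ![1,1,0] + G ![2,0,0] := by
  rw [show antidiagonalTuple 3 2 = {![0,0,2], ![0,1,1], ![0,2,0], ![1,0,1], ![1,1,0], ![2,0,0]} from by decide]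
  rw [Finset.sum_insert (show (![0,0,2] : Fin 3 → ℕ) ∉ ({![0,1,1], ![0,2,0], ![1,0,1], ![1,1,0], ![2,0,0]} : Finset (Fin 3 → ℕ)) from by decide)]
  rw [Finset.sum_insert (show (![0,1,1] : Fin 3 → ℕ) ∉ ({![0,2,0], ![1,0,1], ![1,1,0], ![2,0,0]} : Finset (Fin 3 → ℕ)) from by decide)]
  rw [Finset.sum_insert (show (![0,2,0] : Fin 3 → ℕ) ∉ ({![1,0,1], ![1,1,0], ![2,0,0]} : Finset (Fin 3 → ℕ)) from by decide)]
  rw [Finset.sum_insert (show (![1,0,1] : Fin 3 → ℕ) ∉ ({![1,1,0], ![2,0,0]} : Finset (Fin 3 → ℕ)) from by decide)]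
  rw [Finset.sum_insert (show (![1,1,0] : Fin 3 → ℕ) ∉ ({![2,0,0]} : Finset (Fin 3 → ℕ)) from by decide)]
  rw [Finset.sum_singleton]
  ring

lemma sum_adt4 (G : (Fin 3 → ℕ) → ℝ) : ∑ v ∈ antidiagonalTuple 3 4, G v = G ![0,0,4] + G ![0,1,3] + G ![0,2,2] + G ![0,3,1] + G ![0,4,0] + G ![1,0,3] + G ![1,1,2] + G ![1,2,1] + G ![1,3,0] + G ![2,0,2] + G ![2,1,1] + G ![2,2,0] + G ![3,0,1] + G ![3,1,0] + G ![4,0,0] := by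
  rw [show antidiagonalTuple 3 4 = {![0,0,4], ![0,1,3], ![0,2,2], ![0,3,1], ![0,4,0], ![1,0,3], ![1,1,2], ![1,2,1], ![1,3,0], ![2,0,2], ![2,1,1], ![2,2,0], ![3,0,1], ![3,1,0], ![4,0,0]} from by decide]
  rw [Finset.sum_insert (show (![0,0,4] : Fin 3 → ℕ) ∉ ({![0,1,3], ![0,2,2], ![0,3,1], ![0,4,0], ![1,0,3], ![1,1,2], ![1,2,1], ![1,3,0], ![2,0,2], ![2,1,1], ![2,2,0], ![3,0,1], ![3,1,0], ![4,0,0]} : Finset (Fin 3 → ℕ)) from by decide)]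
  rw [Finset.sum_insert (show (![0,1,3] : Fin 3 → ℕ) ∉ ({![0,2,2], ![0,3,1], ![0,4,0], ![1,0,3], ![1,1,2], ![1,2,1], ![1,3,0], ![2,0,2], ![2,1,1], ![2,2,0], ![3,0,1], ![3,1,0], ![4,0,0]} : Finset (Fin 3 → ℕ)) from by decide)]
  rw [Finset.sum_insert (show (![0,2,2] : Fin 3 → ℕ) ∉ ({![0,3,1], ![0,4,0], ![1,0,3], ![1,1,2], ![1,2,1], ![1,3,0], ![2,0,2], ![2,1,1], ![2,2,0], ![3,0,1], ![3,1,0], ![4,0,0]} : Finset (Fin 3 → ℕ)) from by decide)]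
  rw [Finset.sum_insert (show (![0,3,1] : Fin 3 → ℕ) ∉ ({![0,4,0], ![1,0,3], ![1,1,2], ![1,2,1], ![1,3,0], ![2,0,2], ![2,1,1], ![2,2,0], ![3,0,1], ![3,1,0], ![4,0,0]} : Finset (Fin 3 → ℕ)) from by decide)]
  rw [Finset.sum_insert (show (![0,4,0] : Fin 3 → ℕ) ∉ ({![1,0,3], ![1,1,2], ![1,2,1], ![1,3,0], ![2,0,2], ![2,1,1], ![2,2,0], ![3,0,1], ![3,1,0], ![4,0,0]} : Finset (Fin 3 → ℕ)) from by decide)]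
  rw [Finset.sum_insert (show (![1,0,3] : Fin 3 → ℕ) ∉ ({![1,1,2], ![1,2,1], ![1,3,0], ![2,0,2], ![2,1,1], ![2,2,0], ![3,0,1], ![3,1,0], ![4,0,0]} : Finset (Fin 3 → ℕ)) from by decide)]
  rw [Finset.sum_insert (show (![1,1,2] : Fin 3 → ℕ) ∉ ({![1,2,1], ![1,3,0], ![2,0,2], ![2,1,1], ![2,2,0], ![3,0,1], ![3,1,0], ![4,0,0]} : Finset (Fin 3 → ℕ)) from by decide)]
  rw [Finset.sum_insert (show (![1,2,1] : Fin 3 → ℕ) ∉ ({![1,3,0], ![2,0,2], ![2,1,1], ![2,2,0], ![3,0,1], ![3,1,0], ![4,0,0]} : Finset (Fin 3 → ℕ)) from by decide)]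
  rw [Finset.sum_insert (show (![1,3,0] : Fin 3 → ℕ) ∉ ({![2,0,2], ![2,1,1], ![2,2,0], ![3,0,1], ![3,1,0], ![4,0,0]} : Finset (Fin 3 → ℕ)) from by decide)]
  rw [Finset.sum_insert (show (![2,0,2] : Fin 3 → ℕ) ∉ ({![2,1,1], ![2,2,0], ![3,0,1], ![3,1,0], ![4,0,0]} : Finset (Fin 3 → ℕ)) from by decide)]
  rw [Finset.sum_insert (show (![2,1,1] : Fin 3 → ℕ) ∉ ({![2,2,0], ![3,0,1], ![3,1,0], ![4,0,0]} : Finset (Fin 3 → ℕ)) from by decide)]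
  rw [Finset.sum_insert (show (![2,2,0] : Fin 3 → ℕ) ∉ ({![3,0,1], ![3,1,0], ![4,0,0]} : Finset (Fin 3 → ℕ)) from by decide)]
  rw [Finset.sum_insert (show (![3,0,1] : Fin 3 → ℕ) ∉ ({![3,1,0], ![4,0,0]} : Finset (Fin 3 → ℕ)) from by decide)]
  rw [Finset.sum_insert (show (![3,1,0] : Fin 3 → ℕ) ∉ ({![4,0,0]} : Finset (Fin 3 → ℕ)) from by decide)]
  rw [Finset.sum_singleton]
  ring

lemma sum_adt6 (G : (Fin 3 → ℕ) → ℝ) : ∑ v ∈ antidiagonalTuple 3 6, G v = G ![0,0,6] + G ![0,1,5] + G ![0,2,4] + G ![0,3,3] + G ![0,4,2] + G ![0,5,1] + G ![0,6,0] + G ![1,0,5] + G ![1,1,4] + G ![1,2,3] + G ![1,3,2] + G ![1,4,1] + G ![1,5,0] + G ![2,0,4] + G ![2,1,3] + G ![2,2,2] + G ![2,3,1] + G ![2,4,0] + G ![3,0,3] + G ![3,1,2] + G ![3,2,1] + G ![3,3,0] + G ![4,0,2] + G ![4,1,1] + G ![4,2,0] + G ![5,0,1] + G ![5,1,0] + G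 ![6,0,0] := by
  rw [show antidiagonalTuple 3 6 = {![0,0,6], ![0,1,5], ![0,2,4], ![0,3,3], ![0,4,2], ![0,5,1], ![0,6,0], ![1,0,5], ![1,1,4], ![1,2,3], ![1,3,2], ![1,4,1], ![1,5,0], ![2,0,4], ![2,1,3], ![2,2,2], ![2,3,1], ![2,4,0], ![3,0,3], ![3,1,2], ![3,2,1], ![3,3,0], ![4,0,2], ![4,1,1], ![4,2,0], ![5,0,1], ![5,1,0], ![6,0,0]} from by decide]
  rw [Finset.sum_insert (show (![0,0,6] : Fin 3 → ℕ) ∉ ({![0,1,5], ![0,2,4], ![0,3,3], ![0,4,2], ![0,5,1], ![0,6,0], ![1,0,5], ![1,1,4], ![1,2,3], ![1,3,2], ![1,4,1], ![1,5,0], ![2,0,4], ![2,1,3], ![2,2,2], ![2,3,1], ![2,4,0], ![3,0,3], ![3,1,2], ![3,2,1], ![3,3,0], ![4,0,2], ![4,1,1], ![4,2,0], ![5,0,1], ![5,1,0], ![6,0,0]} : Finset (Fin 3 → ℕ)) from by decide)]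
  rw [Finset.sum_insert (show (![0,1,5] : Fin 3 → ℕ) ∉ ({![0,2,4], ![0,3,3], ![0,4,2], ![0,5,1], ![0,6,0], ![1,0,5], ![1,1,4], ![1,2,3], ![1,3,2], ![1,4,1], ![1,5,0], ![2,0,4], ![2,1,3], ![2,2,2], ![2,3,1], ![2,4,0], ![3,0,3], ![3,1,2], ![3,2,1], ![3,3,0], ![4,0,2], ![4,1,1], ![4,2,0], ![5,0,1], ![5,1,0], ![6,0,0]} : Finset (Fin 3 → ℕ)) from by decide)]
  rw [Finset.sum_insert (show (![0,2,4] : Fin 3 → ℕ) ∉ ({![0,3,3], ![0,4,2], ![0,5,1], ![0,6,0], ![1,0,5], ![1,1,4], ![1,2,3], ![1,3,2], ![1,4,1], ![1,5,0], ![2,0,4], ![2,1,3], ![2,2,2], ![2,3,1], ![2,4,0], ![3,0,3], ![3,1,2], ![3,2,1], ![3,3,0], ![4,0,2], ![4,1,1], ![4,2,0], ![5,0,1], ![5,1,0], ![6,0,0]} : Finset (Fin 3 → ℕ)) from by decide)]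
  rw [Finset.sum_insert (show (![0,3,3] : Fin 3 → ℕ) ∉ ({![0,4,2], ![0,5,1], ![0,6,0], ![1,0,5], ![1,1,4], ![1,2,3], ![1,3,2], ![1,4,1], ![1,5,0], ![2,0,4], ![2,1,3], ![2,2,2], ![2,3,1], ![2,4,0], ![3,0,3], ![3,1,2], ![3,2,1], ![3,3,0], ![4,0,2], ![4,1,1], ![4,2,0], ![5,0,1], ![5,1,0], ![6,0,0]} : Finset (Fin 3 → ℕ)) from by decide)]
  rw [Finset.sum_insert (show (![0,4,2] : Fin 3 → ℕ) ∉ ({![0,5,1], ![0,6,0], ![1,0,5], ![1,1,4], ![1,2,3], ![1,3,2], ![1,4,1], ![1,5,0], ![2,0,4], ![2,1,3], ![2,2,2], ![2,3,1], ![2,4,0], ![3,0,3], ![3,1,2], ![3,2,1], ![3,3,0], ![4,0,2], ![4,1,1], ![4,2,0], ![5,0,1], ![5,1,0], ![6,0,0]} : Finset (Fin 3 → ℕ)) from by decide)]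
  rw [Finset.sum_insert (show (![0,5,1] : Fin 3 → ℕ) ∉ ({![0,6,0], ![1,0,5], ![1,1,4], ![1,2,3], ![1,3,2], ![1,4,1], ![1,5,0], ![2,0,4], ![2,1,3], ![2,2,2], ![2,3,1], ![2,4,0], ![3,0,3], ![3,1,2], ![3,2,1], ![3,3,0], ![4,0,2], ![4,1,1], ![4,2,0], ![5,0,1], ![5,1,0], ![6,0,0]} : Finset (Fin 3 → ℕ)) from by decide)]
  rw [Finset.sum_insert (show (![0,6,0] : Fin 3 → ℕ) ∉ ({![1,0,5], ![1,1,4], ![1,2,3], ![1,3,2], ![1,4,1], ![1,5,0], ![2,0,4], ![2,1,3], ![2,2,2], ![2,3,1], ![2,4,0], ![3,0,3], ![3,1,2], ![3,2,1], ![3,3,0], ![4,0,2], ![4,1,1], ![4,2,0], ![5,0,1], ![5,1,0], ![6,0,0]} : Finset (Fin 3 → ℕ)) from by decide)]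
  rw [Finset.sum_insert (show (![1,0,5] : Fin 3 → ℕ) ∉ ({![1,1,4], ![1,2,3], ![1,3,2], ![1,4,1], ![1,5,0], ![2,0,4], ![2,1,3], ![2,2,2], ![2,3,1], ![2,4,0], ![3,0,3], ![3,1,2], ![3,2,1], ![3,3,0], ![4,0,2], ![4,1,1], ![4,2,0], ![5,0,1], ![5,1,0], ![6,0,0]} : Finset (Fin 3 → ℕ)) from by decide)]
  rw [Finset.sum_insert (show (![1,1,4] : Fin 3 → ℕ) ∉ ({![1,2,3], ![1,3,2], ![1,4,1], ![1,5,0], ![2,0,4], ![2,1,3], ![2,2,2], ![2,3,1], ![2,4,0], ![3,0,3], ![3,1,2], ![3,2,1], ![3,3,0], ![4,0,2], ![4,1,1], ![4,2,0], ![5,0,1], ![5,1,0], ![6,0,0]} : Finset (Fin 3 → ℕ)) from by decide)]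
  rw [Finset.sum_insert (show (![1,2,3] : Fin 3 → ℕ) ∉ ({![1,3,2], ![1,4,1], ![1,5,0], ![2,0,4], ![2,1,3], ![2,2,2], ![2,3,1], ![2,4,0], ![3,0,3], ![3,1,2], ![3,2,1], ![3,3,0], ![4,0,2], ![4,1,1], ![4,2,0], ![5,0,1], ![5,1,0], ![6,0,0]} : Finset (Fin 3 → ℕ)) from by decide)]
  rw [Finset.sum_insert (show (![1,3,2] : Fin 3 → ℕ) ∉ ({![1,4,1], ![1,5,0], ![2,0,4], ![2,1,3], ![2,2,2], ![2,3,1], ![2,4,0], ![3,0,3], ![3,1,2], ![3,2,1], ![3,3,0], ![4,0,2], ![4,1,1], ![4,2,0], ![5,0,1], ![5,1,0], ![6,0,0]} : Finset (Fin 3 → ℕ)) from by decide)]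
  rw [Finset.sum_insert (show (![1,4,1] : Fin 3 → ℕ) ∉ ({![1,5,0], ![2,0,4], ![2,1,3], ![2,2,2], ![2,3,1], ![2,4,0], ![3,0,3], ![3,1,2], ![3,2,1], ![3,3,0], ![4,0,2], ![4,1,1], ![4,2,0], ![5,0,1], ![5,1,0], ![6,0,0]} : Finset (Fin 3 → ℕ)) from by decide)]
  rw [Finset.sum_insert (show (![1,5,0] : Fin 3 → ℕ) ∉ ({![2,0,4], ![2,1,3], ![2,2,2], ![2,3,1], ![2,4,0], ![3,0,3], ![3,1,2], ![3,2,1], ![3,3,0], ![4,0,2], ![4,1,1], ![4,2,0], ![5,0,1], ![5,1,0], ![6,0,0]} : Finset (Fin 3 → ℕ)) from by decide)]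
  rw [Finset.sum_insert (show (![2,0,4] : Fin 3 → ℕ) ∉ ({![2,1,3], ![2,2,2], ![2,3,1], ![2,4,0], ![3,0,3], ![3,1,2], ![3,2,1], ![3,3,0], ![4,0,2], ![4,1,1], ![4,2,0], ![5,0,1], ![5,1,0], ![6,0,0]} : Finset (Fin 3 → ℕ)) from by decide)]
  rw [Finset.sum_insert (show (![2,1,3] : Fin 3 → ℕ) ∉ ({![2,2,2], ![2,3,1], ![2,4,0], ![3,0,3], ![3,1,2], ![3,2,1], ![3,3,0], ![4,0,2], ![4,1,1], ![4,2,0], ![5,0,1], ![5,1,0], ![6,0,0]} : Finset (Fin 3 → ℕ)) from by decide)]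
  rw [Finset.sum_insert (show (![2,2,2] : Fin 3 → ℕ) ∉ ({![2,3,1], ![2,4,0], ![3,0,3], ![3,1,2], ![3,2,1], ![3,3,0], ![4,0,2], ![4,1,1], ![4,2,0], ![5,0,1], ![5,1,0], ![6,0,0]} : Finset (Fin 3 → ℕ)) from by decide)]
  rw [Finset.sum_insert (show (![2,3,1] : Fin 3 → ℕ) ∉ ({![2,4,0], ![3,0,3], ![3,1,2], ![3,2,1], ![3,3,0], ![4,0,2], ![4,1,1], ![4,2,0], ![5,0,1], ![5,1,0], ![6,0,0]} : Finset (Fin 3 → ℕ)) from by decide)]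
  rw [Finset.sum_insert (show (![2,4,0] : Fin 3 → ℕ) ∉ ({![3,0,3], ![3,1,2], ![3,2,1], ![3,3,0], ![4,0,2], ![4,1,1], ![4,2,0], ![5,0,1], ![5,1,0], ![6,0,0]} : Finset (Fin 3 → ℕ)) from by decide)]
  rw [Finset.sum_insert (show (![3,0,3] : Fin 3 → ℕ) ∉ ({![3,1,2], ![3,2,1], ![3,3,0], ![4,0,2], ![4,1,1], ![4,2,0], ![5,0,1], ![5,1,0], ![6,0,0]} : Finset (Fin 3 → ℕ)) from by decide)]
  rw [Finset.sum_insert (show (![3,1,2] : Fin 3 → ℕ) ∉ ({![3,2,1], ![3,3,0], ![4,0,2], ![4,1,1], ![4,2,0], ![5,0,1], ![5,1,0], ![6,0,0]} : Finset (Fin 3 → ℕ)) from by decide)]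
  rw [Finset.sum_insert (show (![3,2,1] : Fin 3 → ℕ) ∉ ({![3,3,0], ![4,0,2], ![4,1,1], ![4,2,0], ![5,0,1], ![5,1,0], ![6,0,0]} : Finset (Fin 3 → ℕ)) from by decide)]
  rw [Finset.sum_insert (show (![3,3,0] : Fin 3 → ℕ) ∉ ({![4,0,2], ![4,1,1], ![4,2,0], ![5,0,1], ![5,1,0], ![6,0,0]} : Finset (Fin 3 → ℕ)) from by decide)]
  rw [Finset.sum_insert (show (![4,0,2] : Fin 3 → ℕ) ∉ ({![4,1,1], ![4,2,0], ![5,0,1], ![5,1,0], ![6,0,0]} : Finset (Fin 3 → ℕ)) from by decide)]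
  rw [Finset.sum_insert (show (![4,1,1] : Fin 3 → ℕ) ∉ ({![4,2,0], ![5,0,1], ![5,1,0], ![6,0,0]} : Finset (Fin 3 → ℕ)) from by decide)]
  rw [Finset.sum_insert (show (![4,2,0] : Fin 3 → ℕ) ∉ ({![5,0,1], ![5,1,0], ![6,0,0]} : Finset (Fin 3 → ℕ)) from by decide)]
  rw [Finset.sum_insert (show (![5,0,1] : Fin 3 → ℕ) ∉ ({![5,1,0], ![6,0,0]} : Finset (Fin 3 → ℕ)) from by decide)]
  rw [Finset.sum_insert (show (![5,1,0] : Fin 3 → ℕ) ∉ ({![6,0,0]} : Finset (Fin 3 → ℕ)) from by decide)]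
  rw [Finset.sum_singleton]
  ring

lemma neg_mem_box {x : Fin 3 → ℝ} (hx : x ∈ boxLayer 3 2) : -x ∈ boxLayer 3 2 := by
  simp only [boxLayer, Finset.mem_filter, Fintype.mem_piFinset, Finset.mem_insert,
    Finset.mem_singleton] at hx ⊢
  constructor
  · intro i
    rcases hx.1 i with h | h | h <;> simp [Pi.neg_apply, h]
  · have := hx.2
    simp only [Pi.neg_apply, neg_sq] at *
    exact this

lemma odd_zero (w₁ w₂ w₃ c₂ c₃ : ℝ) {s : ℕ} (hs : Odd s) {f : MvPolynomial (Fin 3) ℝ}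
    (hf : f.IsHomogeneous s) :
    (∑ i : Fin 3, (w₁ * eval (Pi.single i (1 : ℝ)) f + w₁ * eval (-(Pi.single i (1 : ℝ))) f))
      + ∑ x ∈ boxLayer 3 2, w₂ * eval (fun i => c₂ * x i) f
      + ∑ ε ∈ Fintype.piFinset (fun _ : Fin 3 => ({-1, 1} : Finset ℝ)),
          w₃ * eval (fun i => c₃ * ε i) f = 0 := by
  have hneg : ∀ x : Fin 3 → ℝ, eval (-x) f = -eval x f := by
    intro x
    rw [eval_neg hf, hs.neg_one_pow, neg_one_mul]
  have hkey : ∀ (c : ℝ) (x : Fin 3 → ℝ),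
      eval (fun i => c * (-x) i) f = -eval (fun i => c * x i) f := by
    intro c x
    have e : (fun i => c * (-x) i) = -(fun i => c * x i) := by
      funext i; simp [Pi.neg_apply]
    rw [e, hneg]
  have t1 : (∑ i : Fin 3, (w₁ * eval (Pi.single i (1 : ℝ)) f
      + w₁ * eval (-(Pi.single i (1 : ℝ))) f)) = 0 := by
    refine Finset.sum_eq_zero fun i _ => ?_
    rw [hneg]; ring
  have t2 : (∑ x ∈ boxLayer 3 2, w₂ * eval (fun i => c₂ * x i) f) = 0 := by
    refine Finset.sum_involution (fun x _ => -x) (fun x hx => ?_) (fun x hx hne => ?_)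
      (fun x hx => neg_mem_box hx) (fun x hx => neg_neg x)
    · rw [hkey]; ring
    · intro hcon
      have hzero : ∀ i, x i = 0 := by
        intro i
        have := congrFun hcon i
        simp only [Pi.neg_apply] at this
        linarith
      simp only [boxLayer, Finset.mem_filter] at hx
      have h2 := hx.2
      simp [hzero] at h2
  have t3 : (∑ ε ∈ Fintype.piFinset (fun _ : Fin 3 => ({-1, 1} : Finset ℝ)),
      w₃ * eval (fun i => c₃ * ε i) f) = 0 := by
    refine Finset.sum_involution (fun x _ => -x) (fun x hx => ?_) (fun x hx hne => ?_)
      (fun x hx => ?_) (fun x hx => neg_neg x)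
    · rw [hkey]; ring
    · intro hcon
      have := congrFun hcon 0
      simp only [Pi.neg_apply] at this
      have h0 : x 0 = 0 := by linarith
      simp only [Fintype.mem_piFinset, Finset.mem_insert, Finset.mem_singleton] at hx
      rcases hx 0 with h | h <;> rw [h0] at h <;> norm_num at h
    · simp only [Fintype.mem_piFinset, Finset.mem_insert, Finset.mem_singleton] at hx ⊢
      intro i
      rcases hx i with h | h <;> simp [Pi.neg_apply, h]
  rw [t1, t2, t3]
  ring

end OctDesignAux

set_option maxHeartbeats 4000000 in
open OctDesignAux Finset.Nat in
open MvPolynomial in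
/-- The union of the octahedron (weight 1), the cuboctahedron `(r₂/√2)·I³₂`
(weight `100λ³/(2λ+3)³`, `r₂ = √((2λ+3)/(5λ))`) and the cube `(r₃/√3)·{-1,1}³`
(weight `675/(8(2λ+3)³)`, `r₃ = √((2λ+3)/5)`) is a Euclidean 7-design of 26
points in `ℝ³` (Neumaier–Seidel criterion). -/
theorem oct_cuboct_cube_tight_7design (l : ℝ) (hl : 0 < l) (hl1 : l ≠ 1)
    (r₂ r₃ : ℝ) (hr₂ : r₂ = Real.sqrt ((2 * l + 3) / (5 * l)))
    (hr₃ : r₃ = Real.sqrt ((2 * l + 3) / 5))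
    (s s₁ : ℕ) (hs : 1 ≤ s) (hts : s + 2 * s₁ ≤ 7)
    (f : MvPolynomial (Fin 3) ℝ) (hf : f.IsHomogeneous s)
    (hharm : ∑ i : Fin 3, pderiv i (pderiv i f) = 0) :
    (∑ i : Fin 3, ((1 : ℝ) * (1 : ℝ) ^ (2 * s₁) * eval (Pi.single i (1 : ℝ)) f
        + (1 : ℝ) * (1 : ℝ) ^ (2 * s₁) * eval (-(Pi.single i (1 : ℝ))) f))
      + ∑ x ∈ boxLayer 3 2,
          (100 * l ^ 3 / (2 * l + 3) ^ 3) * r₂ ^ (2 * s₁) *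
            eval (fun i => r₂ / Real.sqrt 2 * x i) f
      + ∑ ε ∈ Fintype.piFinset (fun _ : Fin 3 => ({-1, 1} : Finset ℝ)),
          (675 / (8 * (2 * l + 3) ^ 3)) * r₃ ^ (2 * s₁) *
            eval (fun i => r₃ / Real.sqrt 3 * ε i) f
      = 0 := by
  have h3 : (0 : ℝ) < 2 * l + 3 := by linarith
  have h3ne : (2 * l + 3 : ℝ) ≠ 0 := ne_of_gt h3
  have hlne : l ≠ 0 := ne_of_gt hl
  have hr₂sq : r₂ ^ 2 = (2 * l + 3) / (5 * l) := by
    rw [hr₂, Real.sq_sqrt (by positivity)]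
  have hr₃sq : r₃ ^ 2 = (2 * l + 3) / 5 := by
    rw [hr₃, Real.sq_sqrt (by positivity)]
  have hq₂ : (r₂ / Real.sqrt 2) ^ 2 = (2 * l + 3) / (10 * l) := by
    rw [div_pow, hr₂sq, Real.sq_sqrt (by norm_num : (0:ℝ) ≤ 2), div_div]
    ring_nf
  have hq₃ : (r₃ / Real.sqrt 3) ^ 2 = (2 * l + 3) / 15 := by
    rw [div_pow, hr₃sq, Real.sq_sqrt (by norm_num : (0:ℝ) ≤ 3), div_div]
    ring_nf
  rcases Nat.even_or_odd s with hpar | hpar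
  · have hs7 : s ≤ 7 := by omega
    interval_cases s
    · exact absurd hpar (by decide)
    · -- s = 2
      have hs1 : s₁ ≤ 2 := by omega
      rw [Fin.sum_univ_three, sum_boxLayer, sum_cube, single0, single1, single2,
        negv, negv, negv]
      simp only [eval_scale hf]
      rw [hq₂, hq₃]
      have h000 := harm_rel hharm 0 0 0
      norm_num at h000
      simp only [eval_expand hf, sum_adt2]
      norm_num [Matrix.cons_val_zero, Matrix.cons_val_one, Matrix.head_cons,
        Matrix.cons_val_two, Matrix.tail_cons]
      linear_combination (norm := (field_simp; ring1))
        (1 + 4 * (100 * l ^ 3 / (2 * l + 3) ^ 3 * r₂ ^ (2 * s₁) * ((2 * l + 3) / (10 * l)))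
          + 4 * (675 / (8 * (2 * l + 3) ^ 3) * r₃ ^ (2 * s₁) * ((2 * l + 3) / 15))) * h000

    · exact absurd hpar (by decide)
    · -- s = 4
      have hs1' : s₁ ≤ 1 := by omega
      interval_cases s₁
      · rw [Fin.sum_univ_three, sum_boxLayer, sum_cube, single0, single1, single2,
          negv, negv, negv]
        simp only [eval_scale hf]
        rw [show (r₂ / Real.sqrt 2) ^ 4 = ((2*l+3)/(10*l)) ^ 2 from by
              rw [show (r₂ / Real.sqrt 2) ^ 4 = ((r₂ / Real.sqrt 2) ^ 2) ^ 2 from by ring, hq₂],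
            show (r₃ / Real.sqrt 3) ^ 4 = ((2*l+3)/15) ^ 2 from by
              rw [show (r₃ / Real.sqrt 3) ^ 4 = ((r₃ / Real.sqrt 3) ^ 2) ^ 2 from by ring, hq₃]]
        have h200 := harm_rel hharm 2 0 0
        have h020 := harm_rel hharm 0 2 0
        have h002 := harm_rel hharm 0 0 2
        norm_num at h200 h020 h002
        simp only [eval_expand hf, sum_adt4]
        norm_num [Matrix.cons_val_zero, Matrix.cons_val_one, Matrix.head_cons,
          Matrix.cons_val_two, Matrix.tail_cons]
        linear_combination (norm := (field_simp; ring1))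
          (l/(2*l+3) + 3/(4*(2*l+3))) * h200 + (l/(2*l+3) + 3/(4*(2*l+3))) * h020
            + (l/(2*l+3) + 3/(4*(2*l+3))) * h002
      · rw [Fin.sum_univ_three, sum_boxLayer, sum_cube, single0, single1, single2,
          negv, negv, negv]
        simp only [eval_scale hf]
        rw [show (r₂ / Real.sqrt 2) ^ 4 = ((2*l+3)/(10*l)) ^ 2 from by
              rw [show (r₂ / Real.sqrt 2) ^ 4 = ((r₂ / Real.sqrt 2) ^ 2) ^ 2 from by ring, hq₂],
            show (r₃ / Real.sqrt 3) ^ 4 = ((2*l+3)/15) ^ 2 from by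
              rw [show (r₃ / Real.sqrt 3) ^ 4 = ((r₃ / Real.sqrt 3) ^ 2) ^ 2 from by ring, hq₃],
            show r₂ ^ (2*1) = (2*l+3)/(5*l) from by norm_num [hr₂sq],
            show r₃ ^ (2*1) = (2*l+3)/5 from by norm_num [hr₃sq]]
        have h200 := harm_rel hharm 2 0 0
        have h020 := harm_rel hharm 0 2 0
        have h002 := harm_rel hharm 0 0 2
        norm_num at h200 h020 h002
        simp only [eval_expand hf, sum_adt4]
        norm_num [Matrix.cons_val_zero, Matrix.cons_val_one, Matrix.head_cons,
          Matrix.cons_val_two, Matrix.tail_cons]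
        linear_combination (norm := (field_simp; ring1))
          (7/20 : ℝ) * h200 + (7/20 : ℝ) * h020 + (7/20 : ℝ) * h002

    · exact absurd hpar (by decide)
    · -- s = 6
      have hs1' : s₁ = 0 := by omega
      subst hs1'
      rw [Fin.sum_univ_three, sum_boxLayer, sum_cube, single0, single1, single2,
        negv, negv, negv]
      simp only [eval_scale hf]
      rw [show (r₂ / Real.sqrt 2) ^ 6 = ((2*l+3)/(10*l)) ^ 3 from by
            rw [show (r₂ / Real.sqrt 2) ^ 6 = ((r₂ / Real.sqrt 2) ^ 2) ^ 3 from by ring, hq₂],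
          show (r₃ / Real.sqrt 3) ^ 6 = ((2*l+3)/15) ^ 3 from by
            rw [show (r₃ / Real.sqrt 3) ^ 6 = ((r₃ / Real.sqrt 3) ^ 2) ^ 3 from by ring, hq₃]]
      have h400 := harm_rel hharm 4 0 0
      have h040 := harm_rel hharm 0 4 0
      have h004 := harm_rel hharm 0 0 4
      have h220 := harm_rel hharm 2 2 0
      have h202 := harm_rel hharm 2 0 2
      have h022 := harm_rel hharm 0 2 2
      norm_num at h400 h040 h004 h220 h202 h022
      simp only [eval_expand hf, sum_adt6]
      norm_num [Matrix.cons_val_zero, Matrix.cons_val_one, Matrix.head_cons,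
        Matrix.cons_val_two, Matrix.tail_cons]
      linear_combination (norm := (field_simp; ring1))
        (1/10 : ℝ) * h400 + (1/10 : ℝ) * h040 + (1/10 : ℝ) * h004
          + (1/30 : ℝ) * h220 + (1/30 : ℝ) * h202 + (1/30 : ℝ) * h022

    · exact absurd hpar (by decide)
  · exact odd_zero _ _ _ _ _ hpar hf
end

section
/- Let λ > 0, λ ≠ 1, and in ℝ⁴ consider X = {±e_i : 1≤i≤4} ∪ (1/2)·{-1,1}⁴ with weight 1, together with (λ/√2)·I⁴_2 with weight 1/λ⁶. Then (X,w) is a Euclidean 7-design of 48 points in ℝ⁴: Σ_{x∈X} w(x)‖x‖^{2s_1} f(x) = 0 for all homogeneous harmonic f of degree s with 1 ≤ s ≤ 7-2s_1, s_1 ≥ 0. -/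
open Finset

lemma sum_piFinset4 (t : Finset ℝ) (F : (Fin 4 → ℝ) → ℝ) :
    ∑ x ∈ Fintype.piFinset (fun _ : Fin 4 => t), F x
      = ∑ a ∈ t, ∑ b ∈ t, ∑ c ∈ t, ∑ d ∈ t, F ![a, b, c, d] := by
  have h : ∑ p ∈ t ×ˢ t ×ˢ t ×ˢ t, F ![p.1, p.2.1, p.2.2.1, p.2.2.2]
      = ∑ a ∈ t, ∑ b ∈ t, ∑ c ∈ t, ∑ d ∈ t, F ![a, b, c, d] := by
    simp only [Finset.sum_product]
  rw [← h]
  refine Finset.sum_nbij' (fun x => (x 0, x 1, x 2, x 3))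
    (fun p => ![p.1, p.2.1, p.2.2.1, p.2.2.2]) ?_ ?_ ?_ ?_ ?_
  · intro x hx
    simp only [Fintype.mem_piFinset] at hx
    simp [Finset.mem_product, hx 0, hx 1, hx 2, hx 3]
  · intro p hp
    simp only [Finset.mem_product] at hp
    simp only [Fintype.mem_piFinset]
    intro i
    fin_cases i <;> simp [hp.1, hp.2.1, hp.2.2.1, hp.2.2.2]
  · intro x hx
    funext i
    fin_cases i <;> rfl
  · intro p hp
    rfl
  · intro x hx
    congr 1
    funext i
    fin_cases i <;> rfl

lemma sum_three (F : ℝ → ℝ) : ∑ y ∈ ({-1, 0, 1} : Finset ℝ), F y = F (-1) + F 0 + F 1 := by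
  rw [show ({-1, 0, 1} : Finset ℝ) = insert (-1) (insert 0 {1}) from rfl,
    Finset.sum_insert (by norm_num), Finset.sum_insert (by norm_num), Finset.sum_singleton]
  ring

lemma sum_two (F : ℝ → ℝ) : ∑ y ∈ ({-1, 1} : Finset ℝ), F y = F (-1) + F 1 := by
  rw [show ({-1, 1} : Finset ℝ) = insert (-1) {1} from rfl,
    Finset.sum_insert (by norm_num), Finset.sum_singleton]

lemma cube_sum_s17 (g : (Fin 4 → ℝ) → ℝ) :
    ∑ x ∈ Fintype.piFinset (fun _ : Fin 4 => ({-1, 1} : Finset ℝ)), g x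
    = g ![-1,-1,-1,-1]
    + g ![-1,-1,-1,1]
    + g ![-1,-1,1,-1]
    + g ![-1,-1,1,1]
    + g ![-1,1,-1,-1]
    + g ![-1,1,-1,1]
    + g ![-1,1,1,-1]
    + g ![-1,1,1,1]
    + g ![1,-1,-1,-1]
    + g ![1,-1,-1,1]
    + g ![1,-1,1,-1]
    + g ![1,-1,1,1]
    + g ![1,1,-1,-1]
    + g ![1,1,-1,1]
    + g ![1,1,1,-1]
    + g ![1,1,1,1] := by
  rw [sum_piFinset4]
  simp only [sum_two]
  ring

lemma box_sum (g : (Fin 4 → ℝ) → ℝ) :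
    ∑ x ∈ boxLayer 4 2, g x
    = g ![-1,-1,0,0]
    + g ![-1,0,-1,0]
    + g ![-1,0,0,-1]
    + g ![-1,0,0,1]
    + g ![-1,0,1,0]
    + g ![-1,1,0,0]
    + g ![0,-1,-1,0]
    + g ![0,-1,0,-1]
    + g ![0,-1,0,1]
    + g ![0,-1,1,0]
    + g ![0,0,-1,-1]
    + g ![0,0,-1,1]
    + g ![0,0,1,-1]
    + g ![0,0,1,1]
    + g ![0,1,-1,0]
    + g ![0,1,0,-1]
    + g ![0,1,0,1]
    + g ![0,1,1,0]
    + g ![1,-1,0,0]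
    + g ![1,0,-1,0]
    + g ![1,0,0,-1]
    + g ![1,0,0,1]
    + g ![1,0,1,0]
    + g ![1,1,0,0] := by
  rw [boxLayer, Finset.sum_filter, sum_piFinset4]
  simp only [sum_three, Fin.sum_univ_four, Matrix.cons_val_zero, Matrix.cons_val_one,
    Matrix.head_cons, Matrix.cons_val_two, Matrix.tail_cons, Matrix.cons_val_three]
  norm_num
  ring

open MvPolynomial

noncomputable def mono4 (a : Fin 4 → ℕ) (x : Fin 4 → ℝ) : ℝ := ∏ j, x j ^ a j

noncomputable def Dm4 (a : Fin 4 → ℕ) (p : Fin 4 → ℝ) : ℝ :=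
  ∑ j : Fin 4, (a j : ℝ) * ((a j - 1 : ℕ) : ℝ) * ∏ m, p m ^ (a m - (if j = m then 2 else 0))

lemma evalf (f : MvPolynomial (Fin 4) ℝ) (x : Fin 4 → ℝ) :
    eval x f = ∑ α ∈ f.support, coeff α f * mono4 (fun i => α i) x := by
  rw [eval_eq']; rfl

lemma sub_single_apply (α : Fin 4 →₀ ℕ) (j m : Fin 4) :
    ((α - Finsupp.single j 1 - Finsupp.single j 1 : Fin 4 →₀ ℕ)) m = α m - (if j = m then 2 else 0) := by
  rw [Finsupp.tsub_apply, Finsupp.tsub_apply, Finsupp.single_apply]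
  split <;> omega

lemma sub_single_self (α : Fin 4 →₀ ℕ) (j : Fin 4) :
    ((α - Finsupp.single j 1 : Fin 4 →₀ ℕ)) j = α j - 1 := by
  rw [Finsupp.tsub_apply, Finsupp.single_eq_same]

lemma evalDelta (f : MvPolynomial (Fin 4) ℝ) (p : Fin 4 → ℝ) :
    eval p (∑ j : Fin 4, pderiv j (pderiv j f))
      = ∑ α ∈ f.support, coeff α f * Dm4 (fun i => α i) p := by
  conv_lhs => rw [← support_sum_monomial_coeff f]
  simp only [map_sum, pderiv_monomial, eval_monomial]
  rw [Finset.sum_comm]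
  refine Finset.sum_congr rfl fun α _ => ?_
  rw [Dm4, Finset.mul_sum]
  refine Finset.sum_congr rfl fun j _ => ?_
  rw [Finsupp.prod_fintype _ _ (fun i => pow_zero _)]
  simp only [sub_single_self, sub_single_apply]
  push_cast
  ring_nf

noncomputable abbrev cube4 : Finset (Fin 4 → ℝ) :=
  Fintype.piFinset fun _ : Fin 4 => ({-1, 1} : Finset ℝ)

lemma swap1 {A : Type*} (S : Finset (Fin 4 → ℝ)) (T : Finset A) (c : A → ℝ)
    (m : A → (Fin 4 → ℝ) → ℝ) :
    ∑ α ∈ T, c α * ∑ x ∈ S, m α x = ∑ x ∈ S, ∑ α ∈ T, c α * m α x := by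
  simp only [Finset.mul_sum]; exact Finset.sum_comm

lemma swap2 {A : Type*} (T : Finset A) (c : A → ℝ) (m : A → Fin 4 → ℝ) :
    ∑ α ∈ T, c α * ∑ i : Fin 4, m α i = ∑ i : Fin 4, ∑ α ∈ T, c α * m α i := by
  simp only [Finset.mul_sum]; exact Finset.sum_comm

lemma expand (s : ℕ) (f : MvPolynomial (Fin 4) ℝ) (hf : f.IsHomogeneous s)
    (hharm : ∑ i : Fin 4, pderiv i (pderiv i f) = 0) (k u v : ℝ)
    (key : ∀ a : Fin 4 → ℕ, a 0 + a 1 + a 2 + a 3 = s →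
      (∑ i : Fin 4, (mono4 a (Pi.single i 1) + mono4 a (-(Pi.single i 1))))
        + ∑ ε ∈ cube4, mono4 a (fun i => ε i / 2)
        + k * ∑ x ∈ boxLayer 4 2, mono4 a x
      = u * (∑ i : Fin 4, (Dm4 a (Pi.single i 1) + Dm4 a (-(Pi.single i 1))))
        + v * ∑ ε ∈ cube4, Dm4 a ε) :
    (∑ i : Fin 4, (eval (Pi.single i (1:ℝ)) f + eval (-(Pi.single i (1:ℝ))) f))
      + ∑ ε ∈ cube4, eval (fun i => ε i / 2) f
      + k * ∑ x ∈ boxLayer 4 2, eval x f = 0 := by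
  have hD : ∀ p : Fin 4 → ℝ, ∑ α ∈ f.support, coeff α f * Dm4 (fun i => α i) p = 0 := by
    intro p; rw [← evalDelta, hharm, map_zero]
  have hdeg : ∀ α ∈ f.support, ((α 0 : ℕ) + α 1 + α 2 + α 3) = s := by
    intro α hα
    have h1 : α.degree = s := by
      by_contra h
      exact mem_support_iff.mp hα (hf.coeff_eq_zero h)
    have h2 : ∑ i ∈ α.support, α i = ∑ i : Fin 4, α i :=
      Finset.sum_subset (Finset.subset_univ _)
        (fun i _ hi => Finsupp.notMem_support_iff.mp hi)
    calc (α 0 : ℕ) + α 1 + α 2 + α 3 = ∑ i : Fin 4, α i := by rw [Fin.sum_univ_four]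
      _ = ∑ i ∈ α.support, α i := h2.symm
      _ = α.degree := by rw [Finsupp.degree_apply]
      _ = s := h1
  have hA : ∑ α ∈ f.support, coeff α f *
        (∑ i : Fin 4, (mono4 (fun i => α i) (Pi.single i 1)
          + mono4 (fun i => α i) (-(Pi.single i 1))))
      = ∑ i : Fin 4, (eval (Pi.single i (1:ℝ)) f + eval (-(Pi.single i (1:ℝ))) f) := by
    calc ∑ α ∈ f.support, coeff α f *
          (∑ i : Fin 4, (mono4 (fun i => α i) (Pi.single i 1)
            + mono4 (fun i => α i) (-(Pi.single i 1))))
        = (∑ α ∈ f.support, coeff α f * ∑ i : Fin 4, mono4 (fun i => α i) (Pi.single i 1))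
          + ∑ α ∈ f.support, coeff α f * ∑ i : Fin 4, mono4 (fun i => α i) (-(Pi.single i 1)) := by
          rw [← Finset.sum_add_distrib]
          exact Finset.sum_congr rfl fun α _ => by rw [Finset.sum_add_distrib, mul_add]
      _ = (∑ i : Fin 4, ∑ α ∈ f.support, coeff α f * mono4 (fun i => α i) (Pi.single i 1))
          + ∑ i : Fin 4, ∑ α ∈ f.support, coeff α f * mono4 (fun i => α i) (-(Pi.single i 1)) := by
          rw [swap2, swap2]
      _ = ∑ i : Fin 4, (eval (Pi.single i (1:ℝ)) f + eval (-(Pi.single i (1:ℝ))) f) := by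
          rw [← Finset.sum_add_distrib]
          exact Finset.sum_congr rfl fun i _ => by rw [evalf, evalf]
  have hB : ∑ α ∈ f.support, coeff α f *
        (∑ ε ∈ cube4, mono4 (fun i => α i) (fun i => ε i / 2))
      = ∑ ε ∈ cube4, eval (fun i => ε i / 2) f := by
    rw [swap1]
    exact Finset.sum_congr rfl fun ε _ => (evalf f _).symm
  have hC : ∑ α ∈ f.support, coeff α f *
        (∑ x ∈ boxLayer 4 2, mono4 (fun i => α i) x)
      = ∑ x ∈ boxLayer 4 2, eval x f := by
    rw [swap1]
    exact Finset.sum_congr rfl fun x _ => (evalf f _).symm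
  have step1 :
      (∑ i : Fin 4, (eval (Pi.single i (1:ℝ)) f + eval (-(Pi.single i (1:ℝ))) f))
        + ∑ ε ∈ cube4, eval (fun i => ε i / 2) f
        + k * ∑ x ∈ boxLayer 4 2, eval x f
      = ∑ α ∈ f.support, coeff α f *
          ((∑ i : Fin 4, (mono4 (fun i => α i) (Pi.single i 1)
              + mono4 (fun i => α i) (-(Pi.single i 1))))
            + ∑ ε ∈ cube4, mono4 (fun i => α i) (fun i => ε i / 2)
            + k * ∑ x ∈ boxLayer 4 2, mono4 (fun i => α i) x) := by
    symm
    calc ∑ α ∈ f.support, coeff α f *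
          ((∑ i : Fin 4, (mono4 (fun i => α i) (Pi.single i 1)
              + mono4 (fun i => α i) (-(Pi.single i 1))))
            + ∑ ε ∈ cube4, mono4 (fun i => α i) (fun i => ε i / 2)
            + k * ∑ x ∈ boxLayer 4 2, mono4 (fun i => α i) x)
        = (∑ α ∈ f.support, coeff α f *
            (∑ i : Fin 4, (mono4 (fun i => α i) (Pi.single i 1)
              + mono4 (fun i => α i) (-(Pi.single i 1)))))
          + (∑ α ∈ f.support, coeff α f *
              (∑ ε ∈ cube4, mono4 (fun i => α i) (fun i => ε i / 2)))
          + k * ∑ α ∈ f.support, coeff α f *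
              (∑ x ∈ boxLayer 4 2, mono4 (fun i => α i) x) := by
          rw [Finset.mul_sum, ← Finset.sum_add_distrib, ← Finset.sum_add_distrib]
          exact Finset.sum_congr rfl fun α _ => by ring
      _ = _ := by rw [hA, hB, hC]
  rw [step1]
  have step2 : ∀ α ∈ f.support,
      coeff α f *
          ((∑ i : Fin 4, (mono4 (fun i => α i) (Pi.single i 1)
              + mono4 (fun i => α i) (-(Pi.single i 1))))
            + ∑ ε ∈ cube4, mono4 (fun i => α i) (fun i => ε i / 2)
            + k * ∑ x ∈ boxLayer 4 2, mono4 (fun i => α i) x)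
      = coeff α f *
          (u * (∑ i : Fin 4, (Dm4 (fun i => α i) (Pi.single i 1)
              + Dm4 (fun i => α i) (-(Pi.single i 1))))
            + v * ∑ ε ∈ cube4, Dm4 (fun i => α i) ε) := by
    intro α hα
    rw [key _ (hdeg α hα)]
  rw [Finset.sum_congr rfl step2]
  have hDA : ∑ α ∈ f.support, coeff α f *
        (∑ i : Fin 4, (Dm4 (fun i => α i) (Pi.single i 1)
          + Dm4 (fun i => α i) (-(Pi.single i 1)))) = 0 := by
    calc ∑ α ∈ f.support, coeff α f *
          (∑ i : Fin 4, (Dm4 (fun i => α i) (Pi.single i 1)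
            + Dm4 (fun i => α i) (-(Pi.single i 1))))
        = (∑ α ∈ f.support, coeff α f * ∑ i : Fin 4, Dm4 (fun i => α i) (Pi.single i 1))
          + ∑ α ∈ f.support, coeff α f * ∑ i : Fin 4, Dm4 (fun i => α i) (-(Pi.single i 1)) := by
          rw [← Finset.sum_add_distrib]
          exact Finset.sum_congr rfl fun α _ => by rw [Finset.sum_add_distrib, mul_add]
      _ = (∑ i : Fin 4, ∑ α ∈ f.support, coeff α f * Dm4 (fun i => α i) (Pi.single i 1))
          + ∑ i : Fin 4, ∑ α ∈ f.support, coeff α f * Dm4 (fun i => α i) (-(Pi.single i 1)) := by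
          rw [swap2, swap2]
      _ = 0 := by simp only [hD, Finset.sum_const_zero, add_zero]
  have hDB : ∑ α ∈ f.support, coeff α f * (∑ ε ∈ cube4, Dm4 (fun i => α i) ε) = 0 := by
    rw [swap1]
    simp only [hD, Finset.sum_const_zero]
  calc ∑ α ∈ f.support, coeff α f *
          (u * (∑ i : Fin 4, (Dm4 (fun i => α i) (Pi.single i 1)
              + Dm4 (fun i => α i) (-(Pi.single i 1))))
            + v * ∑ ε ∈ cube4, Dm4 (fun i => α i) ε)
      = u * (∑ α ∈ f.support, coeff α f *
            (∑ i : Fin 4, (Dm4 (fun i => α i) (Pi.single i 1)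
              + Dm4 (fun i => α i) (-(Pi.single i 1)))))
          + v * (∑ α ∈ f.support, coeff α f * (∑ ε ∈ cube4, Dm4 (fun i => α i) ε)) := by
        rw [Finset.mul_sum, Finset.mul_sum, ← Finset.sum_add_distrib]
        exact Finset.sum_congr rfl fun α _ => by ring
    _ = 0 := by rw [hDA, hDB]; ring

lemma ps0 : Pi.single (0 : Fin 4) (1:ℝ) = ![1,0,0,0] := by funext i; fin_cases i <;> simp
lemma ps1 : Pi.single (1 : Fin 4) (1:ℝ) = ![0,1,0,0] := by funext i; fin_cases i <;> simp
lemma ps2 : Pi.single (2 : Fin 4) (1:ℝ) = ![0,0,1,0] := by funext i; fin_cases i <;> simp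
lemma ps3 : Pi.single (3 : Fin 4) (1:ℝ) = ![0,0,0,1] := by funext i; fin_cases i <;> simp
lemma nps0 : -(Pi.single (0 : Fin 4) (1:ℝ)) = ![-1,0,0,0] := by rw [ps0]; funext i; fin_cases i <;> simp
lemma nps1 : -(Pi.single (1 : Fin 4) (1:ℝ)) = ![0,-1,0,0] := by rw [ps1]; funext i; fin_cases i <;> simp
lemma nps2 : -(Pi.single (2 : Fin 4) (1:ℝ)) = ![0,0,-1,0] := by rw [ps2]; funext i; fin_cases i <;> simp
lemma nps3 : -(Pi.single (3 : Fin 4) (1:ℝ)) = ![0,0,0,-1] := by rw [ps3]; funext i; fin_cases i <;> simp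

set_option maxHeartbeats 2000000 in
lemma key2_s17 (k : ℝ) (a : Fin 4 → ℕ) (h : a 0 + a 1 + a 2 + a 3 = 2) :
    (∑ i : Fin 4, (mono4 a (Pi.single i 1) + mono4 a (-(Pi.single i 1))))
      + ∑ ε ∈ cube4, mono4 a (fun i => ε i / 2)
      + k * ∑ x ∈ boxLayer 4 2, mono4 a x
    = ((3 + 6*k)/8) * (∑ i : Fin 4, (Dm4 a (Pi.single i 1) + Dm4 a (-(Pi.single i 1))))
      + 0 * ∑ ε ∈ cube4, Dm4 a ε := by
  obtain ⟨a0,a1,a2,a3,rfl⟩ : ∃ b0 b1 b2 b3, a = ![b0,b1,b2,b3] :=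
    ⟨a 0, a 1, a 2, a 3, by funext i; fin_cases i <;> rfl⟩
  simp only [Matrix.cons_val_zero, Matrix.cons_val_one, Matrix.head_cons, Matrix.cons_val_two,
    Matrix.tail_cons, Matrix.cons_val_three] at h
  rw [cube_sum_s17, box_sum, cube_sum_s17]
  simp only [mono4, Dm4, Fin.sum_univ_four, Fin.prod_univ_four, ps0, ps1, ps2, ps3,
    nps0, nps1, nps2, nps3, Matrix.cons_val_zero, Matrix.cons_val_one, Matrix.head_cons,
    Matrix.cons_val_two, Matrix.tail_cons, Matrix.cons_val_three, Fin.reduceEq, reduceIte, Matrix.cons_val, Pi.neg_apply]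
  have b0 : a0 ≤ 2 := by omega
  interval_cases a0 <;>
    (have b1 : a1 ≤ 2 := by omega
     interval_cases a1 <;>
       first
       | (exfalso; omega)
       | (have b2 : a2 ≤ 2 := by omega
          interval_cases a2 <;>
            first
            | (exfalso; omega)
            | (have b3 : a3 ≤ 2 := by omega
               interval_cases a3 <;>
                 first
                 | (exfalso; omega)
                 | (norm_num; try ring))))

set_option maxHeartbeats 4000000 in
lemma key4 (k : ℝ) (a : Fin 4 → ℕ) (h : a 0 + a 1 + a 2 + a 3 = 4) :
    (∑ i : Fin 4, (mono4 a (Pi.single i 1) + mono4 a (-(Pi.single i 1))))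
      + ∑ ε ∈ cube4, mono4 a (fun i => ε i / 2)
      + k * ∑ x ∈ boxLayer 4 2, mono4 a x
    = ((1 + 4*k)/8) * (∑ i : Fin 4, (Dm4 a (Pi.single i 1) + Dm4 a (-(Pi.single i 1))))
      + 0 * ∑ ε ∈ cube4, Dm4 a ε := by
  obtain ⟨a0,a1,a2,a3,rfl⟩ : ∃ b0 b1 b2 b3, a = ![b0,b1,b2,b3] :=
    ⟨a 0, a 1, a 2, a 3, by funext i; fin_cases i <;> rfl⟩
  simp only [Matrix.cons_val_zero, Matrix.cons_val_one, Matrix.head_cons, Matrix.cons_val_two,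
    Matrix.tail_cons, Matrix.cons_val_three] at h
  rw [cube_sum_s17, box_sum, cube_sum_s17]
  simp only [mono4, Dm4, Fin.sum_univ_four, Fin.prod_univ_four, ps0, ps1, ps2, ps3,
    nps0, nps1, nps2, nps3, Matrix.cons_val_zero, Matrix.cons_val_one, Matrix.head_cons,
    Matrix.cons_val_two, Matrix.tail_cons, Matrix.cons_val_three, Fin.reduceEq, reduceIte, Matrix.cons_val, Pi.neg_apply]
  have b0 : a0 ≤ 4 := by omega
  interval_cases a0 <;>
    (have b1 : a1 ≤ 4 := by omega
     interval_cases a1 <;>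
       first
       | (exfalso; omega)
       | (have b2 : a2 ≤ 4 := by omega
          interval_cases a2 <;>
            first
            | (exfalso; omega)
            | (have b3 : a3 ≤ 4 := by omega
               interval_cases a3 <;>
                 first
                 | (exfalso; omega)
                 | (norm_num; try ring))))

set_option maxHeartbeats 100000000 in
lemma key6 (a : Fin 4 → ℕ) (h : a 0 + a 1 + a 2 + a 3 = 6) :
    (∑ i : Fin 4, (mono4 a (Pi.single i 1) + mono4 a (-(Pi.single i 1))))
      + ∑ ε ∈ cube4, mono4 a (fun i => ε i / 2)
      + (1/8 : ℝ) * ∑ x ∈ boxLayer 4 2, mono4 a x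
    = (1/24 : ℝ) * (∑ i : Fin 4, (Dm4 a (Pi.single i 1) + Dm4 a (-(Pi.single i 1))))
      + (1/384 : ℝ) * ∑ ε ∈ cube4, Dm4 a ε := by
  obtain ⟨a0,a1,a2,a3,rfl⟩ : ∃ b0 b1 b2 b3, a = ![b0,b1,b2,b3] :=
    ⟨a 0, a 1, a 2, a 3, by funext i; fin_cases i <;> rfl⟩
  simp only [Matrix.cons_val_zero, Matrix.cons_val_one, Matrix.head_cons, Matrix.cons_val_two,
    Matrix.tail_cons, Matrix.cons_val_three] at h
  rw [cube_sum_s17, box_sum, cube_sum_s17]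
  simp only [mono4, Dm4, Fin.sum_univ_four, Fin.prod_univ_four, ps0, ps1, ps2, ps3,
    nps0, nps1, nps2, nps3, Matrix.cons_val_zero, Matrix.cons_val_one, Matrix.head_cons,
    Matrix.cons_val_two, Matrix.tail_cons, Matrix.cons_val_three, Fin.reduceEq, reduceIte, Matrix.cons_val, Pi.neg_apply]
  have b0 : a0 ≤ 6 := by omega
  interval_cases a0 <;>
    (have b1 : a1 ≤ 6 := by omega
     interval_cases a1 <;>
       first
       | (exfalso; omega)
       | (have b2 : a2 ≤ 6 := by omega
          interval_cases a2 <;>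
            first
            | (exfalso; omega)
            | (have b3 : a3 ≤ 6 := by omega
               interval_cases a3 <;>
                 first
                 | (exfalso; omega)
                 | (norm_num; try ring))))

lemma deg_eq {s : ℕ} {f : MvPolynomial (Fin 4) ℝ} (hf : f.IsHomogeneous s)
    {α : Fin 4 →₀ ℕ} (hα : α ∈ f.support) : ∑ j : Fin 4, α j = s := by
  have h1 : α.degree = s := by
    by_contra h
    exact mem_support_iff.mp hα (hf.coeff_eq_zero h)
  have h2 : ∑ i ∈ α.support, α i = ∑ i : Fin 4, α i :=
    Finset.sum_subset (Finset.subset_univ _)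
      (fun i _ hi => Finsupp.notMem_support_iff.mp hi)
  rw [← h2, ← h1, Finsupp.degree_apply]

lemma eval_mul_left {s : ℕ} {f : MvPolynomial (Fin 4) ℝ} (hf : f.IsHomogeneous s)
    (c : ℝ) (x : Fin 4 → ℝ) :
    eval (fun i => c * x i) f = c ^ s * eval x f := by
  rw [evalf, evalf, Finset.mul_sum]
  refine Finset.sum_congr rfl fun α hα => ?_
  rw [mono4, mono4]
  have : ∏ j : Fin 4, (c * x j) ^ α j
      = c ^ (∑ j : Fin 4, α j) * ∏ j : Fin 4, x j ^ α j := by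
    rw [← Finset.prod_pow_eq_pow_sum, ← Finset.prod_mul_distrib]
    exact Finset.prod_congr rfl fun j _ => mul_pow _ _ _
  rw [this, deg_eq hf hα]
  ring

lemma eval_neg_pt {s : ℕ} {f : MvPolynomial (Fin 4) ℝ} (hf : f.IsHomogeneous s)
    (x : Fin 4 → ℝ) : eval (-x) f = (-1 : ℝ) ^ s * eval x f := by
  rw [show (-x) = (fun i => (-1 : ℝ) * x i) from funext fun i => (neg_one_mul _).symm]
  exact eval_mul_left hf _ x

open MvPolynomial in
/-- The minimal vectors of `D₄*` (namely `{±e_i} ∪ (1/2)·{-1,1}⁴`, weight 1) together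
with the scaled minimal vectors `(λ/√2)·I⁴₂` of `D₄` (weight `1/λ⁶`) form a
Euclidean 7-design of 48 points in `ℝ⁴` (Neumaier–Seidel criterion). -/
theorem d4_tight_7design (l : ℝ) (hl : 0 < l) (hl1 : l ≠ 1)
    (s s₁ : ℕ) (hs : 1 ≤ s) (hts : s + 2 * s₁ ≤ 7)
    (f : MvPolynomial (Fin 4) ℝ) (hf : f.IsHomogeneous s)
    (hharm : ∑ i : Fin 4, pderiv i (pderiv i f) = 0) :
    (∑ i : Fin 4, ((1 : ℝ) * (1 : ℝ) ^ (2 * s₁) * eval (Pi.single i (1 : ℝ)) f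
        + (1 : ℝ) * (1 : ℝ) ^ (2 * s₁) * eval (-(Pi.single i (1 : ℝ))) f))
      + ∑ ε ∈ Fintype.piFinset (fun _ : Fin 4 => ({-1, 1} : Finset ℝ)),
          (1 : ℝ) * (1 : ℝ) ^ (2 * s₁) * eval (fun i => ε i / 2) f
      + ∑ x ∈ boxLayer 4 2,
          (1 / l ^ 6) * l ^ (2 * s₁) * eval (fun i => l / Real.sqrt 2 * x i) f
      = 0 := by
  simp only [one_pow, one_mul]
  have hl0 : l ≠ 0 := ne_of_gt hl
  have hsqrt2 : Real.sqrt 2 ^ 2 = 2 := Real.sq_sqrt (by norm_num)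
  have hsqrt0 : Real.sqrt 2 ≠ 0 := by positivity
  rcases Nat.even_or_odd s with he | ho
  · -- even case
    set K : ℝ := 1 / l ^ 6 * l ^ (2 * s₁) * (l / Real.sqrt 2) ^ s with hK
    have hbox : ∑ x ∈ boxLayer 4 2,
          (1 / l ^ 6) * l ^ (2 * s₁) * eval (fun i => l / Real.sqrt 2 * x i) f
        = K * ∑ x ∈ boxLayer 4 2, eval x f := by
      rw [Finset.mul_sum]
      refine Finset.sum_congr rfl fun x _ => ?_
      rw [eval_mul_left hf]
      ring
    rw [hbox]
    obtain ⟨r, rfl⟩ := he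
    have hr : r = 1 ∨ r = 2 ∨ r = 3 := by omega
    rcases hr with rfl | rfl | rfl
    · exact expand 2 f hf hharm K ((3 + 6*K)/8) 0 (key2_s17 K)
    · exact expand 4 f hf hharm K ((1 + 4*K)/8) 0 (key4 K)
    · have hs₁ : s₁ = 0 := by omega
      have h6 : Real.sqrt 2 ^ 6 = 8 := by
        calc Real.sqrt 2 ^ 6 = (Real.sqrt 2 ^ 2) ^ 3 := by ring
        _ = 8 := by rw [hsqrt2]; norm_num
      have hK8 : K = 1/8 := by
        rw [hK, hs₁]
        rw [show ((3 + 3 : ℕ)) = 6 from rfl, div_pow, h6]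
        field_simp
        simp
      rw [hK8]
      exact expand 6 f hf hharm (1/8) (1/24) (1/384) (fun a ha => key6 a ha)
  · -- odd case
    have hneg : ∀ x : Fin 4 → ℝ, eval (-x) f = - eval x f := by
      intro x
      rw [eval_neg_pt hf, ho.neg_one_pow]
      ring
    have h1 : ∑ i : Fin 4, (eval (Pi.single i (1:ℝ)) f + eval (-(Pi.single i (1:ℝ))) f) = 0 :=
      Finset.sum_eq_zero fun i _ => by rw [hneg]; ring
    have h2 : ∑ ε ∈ Fintype.piFinset (fun _ : Fin 4 => ({-1, 1} : Finset ℝ)),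
        eval (fun i => ε i / 2) f = 0 := by
      refine Finset.sum_involution (fun ε _ => -ε) ?_ ?_ ?_ ?_
      · intro ε hε
        have : (fun i => (-ε) i / 2) = -(fun i => ε i / 2) := by
          funext i; simp [neg_div]
        rw [this, hneg]
        ring
      · intro ε hε h0 hc
        have h00 : ε 0 = 0 := by
          have := congrFun hc 0
          simp only [Pi.neg_apply] at this
          linarith
        simp only [Fintype.mem_piFinset, Finset.mem_insert, Finset.mem_singleton] at hε
        rcases hε 0 with h | h <;> rw [h] at h00 <;> norm_num at h00
      · intro ε hε
        simp only [Fintype.mem_piFinset, Finset.mem_insert, Finset.mem_singleton] at hε ⊢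
        intro i
        rcases hε i with h | h <;> simp [h]
      · intro ε hε
        simp
    have h3 : ∑ x ∈ boxLayer 4 2,
        (1 / l ^ 6) * l ^ (2 * s₁) * eval (fun i => l / Real.sqrt 2 * x i) f = 0 := by
      refine Finset.sum_involution (fun x _ => -x) ?_ ?_ ?_ ?_
      · intro x hx
        have : (fun i => l / Real.sqrt 2 * (-x) i) = -(fun i => l / Real.sqrt 2 * x i) := by
          funext i; simp [mul_neg]
        rw [this, hneg]
        ring
      · intro x hx h0
        intro hc
        simp only [boxLayer, Finset.mem_filter] at hx
        have hzero : ∀ i, x i = 0 := by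
          intro i
          have := congrFun hc i
          simp only [Pi.neg_apply] at this
          linarith
        have := hx.2
        rw [Finset.sum_congr rfl (fun i _ => by rw [hzero i])] at this
        norm_num at this
      · intro x hx
        simp only [boxLayer, Finset.mem_filter, Fintype.mem_piFinset, Finset.mem_insert,
          Finset.mem_singleton] at hx ⊢
        refine ⟨fun i => ?_, ?_⟩
        · rcases hx.1 i with h | h | h <;> simp [h]
        · rw [← hx.2]
          exact Finset.sum_congr rfl fun i _ => by simp
      · intro x hx
        simp
    rw [h1, h2, h3]
    ring
end
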